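/- arXiv:1708.01607 — 5 statements merged into one kernel-verified Lean document; each statement's English description precedes it below -/
import Mathlib

section
/- For k ≥ r ≥ 3, if k = 2r-3, or (k ≥ 2r-2 and r is even), or (k ≥ 2r-1 and r ≡ 2 mod 3), then α(k, r) = k(2r - 4). -/
open SimpleGraph

/-- `n` is the number of vertices of a `K_r`-free `k`-partite graph in which
the subgraph induced by any `k - i` parts contains a clique of size `r - 1`. -/
def BetaWitness (i k r n : ℕ) : Prop :=
  ∃ (G : SimpleGraph (Fin n)) (P : Fin n → Fin k),
    (∀ u v, G.Adj u v → P u ≠ P v) ∧ G.CliqueFree r ∧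
    ∀ S : Finset (Fin k), S.card = i →
      ∃ T : Finset (Fin n), G.IsNClique (r - 1) T ∧ ∀ v ∈ T, P v ∉ S

noncomputable def beta (i k r : ℕ) : ℕ := sInf {n | BetaWitness i k r n}

/-- A `k`-partite graph with partition map `P` is `K_r`-partite-saturated. -/
def PartiteSaturated {V : Type} (k r : ℕ) (G : SimpleGraph V) (P : V → Fin k) : Prop :=
  (∀ u v, G.Adj u v → P u ≠ P v) ∧ G.CliqueFree r ∧
  ∀ u v, P u ≠ P v → ¬ G.Adj u v →
    ¬ (G ⊔ SimpleGraph.fromEdgeSet {s(u, v)}).CliqueFree r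

/-- `m` is the number of edges between an independent transversal `X` and its complement
in a `K_r`-partite-saturated `k`-partite graph. -/
def AlphaWitness (k r m : ℕ) : Prop :=
  ∃ (n : ℕ) (G : SimpleGraph (Fin n)) (P : Fin n → Fin k) (x : Fin k → Fin n),
    PartiteSaturated k r G P ∧ (∀ i, P (x i) = i) ∧
    (∀ i j, ¬ G.Adj (x i) (x j)) ∧
    m = ∑ i : Fin k, (G.neighborSet (x i)).ncard

noncomputable def alpha (k r : ℕ) : ℕ := sInf {m | AlphaWitness k r m}


open Finset



def cyc (m a b : ℕ) : Prop :=
  b = a + 1 ∨ a = b + 1 ∨ (a + 1 = m ∧ b = 0) ∨ (b + 1 = m ∧ a = 0)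
def coreAdj (m a b : ℕ) : Prop := a ≠ b ∧ ¬ cyc m a b


/-- cycle adjacency on `ZMod m` in terms of naturals `< m` -/
lemma cyc_symm {m a b : ℕ} (h : cyc m a b) : cyc m b a := by
  unfold cyc at *; tauto

lemma coreAdj_symm {m a b : ℕ} (h : coreAdj m a b) : coreAdj m b a :=
  ⟨fun he => h.1 he.symm, fun hc => h.2 (cyc_symm hc)⟩

lemma mod_lt_two_mul {a t : ℕ} (ha : a < 2*t) :
    a % t = if a < t then a else a - t := by
  split_ifs with h
  · exact Nat.mod_eq_of_lt h
  · rw [Nat.mod_eq_sub_mod (by omega)]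
    exact Nat.mod_eq_of_lt (by omega)

lemma cyc_of_succ {m z : ℕ} (hm : 2 ≤ m) (hz : z < m) : cyc m z ((z+1) % m) := by
  rcases Nat.lt_or_ge (z+1) m with h | h
  · left; rw [Nat.mod_eq_of_lt h]
  · have hz1 : z + 1 = m := by omega
    right; right; left
    constructor
    · exact hz1
    · rw [hz1, Nat.mod_self]

lemma succ_mod_shift {m a : ℕ} (hm : 2 ≤ m) : ((a % m) + 1) % m = (a+1) % m := by
  conv_rhs => rw [Nat.add_mod]
  rw [Nat.mod_eq_of_lt (show 1 < m by omega)]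

lemma rot_inv {m g z : ℕ} (hm : 0 < m) (hg : g ≤ m) (hz : z < m) :
    ((z + m - g) % m + g) % m = z := by
  have h1 : (z + m - g) % m + g ≡ (z + m - g) + g [MOD m] :=
    Nat.ModEq.add_right g (Nat.mod_modEq _ _)
  have h2 : (z + m - g) + g = z + m := by omega
  have h3 : (z + m - g) % m + g ≡ z [MOD m] := by
    calc (z + m - g) % m + g ≡ (z + m - g) + g [MOD m] := h1
    _ = z + m := h2
    _ ≡ z + 0 [MOD m] := Nat.ModEq.add_left z (Nat.modEq_zero_iff_dvd.2 dvd_rfl)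
    _ = z := by omega
  calc ((z + m - g) % m + g) % m = z % m := h3
  _ = z := Nat.mod_eq_of_lt hz

/-- key bound: an independent set in the cycle C_m has at most ⌊m/2⌋ elements;
    stated via a base point. -/
lemma count1 {m : ℕ} (hm : 3 ≤ m) (I : Finset ℕ) (hsub : ∀ z ∈ I, z < m)
    (hadj : ∀ z ∈ I, ∀ z' ∈ I, z ≠ z' → coreAdj m z z') : I.card ≤ (m-2)/2 + 1 := by
  rcases Finset.eq_empty_or_nonempty I with rfl | ⟨z₀, hz₀⟩
  · simp
  have hz₀m : z₀ < m := hsub z₀ hz₀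
  have hcard : (I.erase z₀).card ≤ ((m-2)/2) := by
    have hIcc : (Finset.Icc 1 ((m-2)/2)).card = (m-2)/2 := by rw [Nat.card_Icc]; omega
    rw [← hIcc]
    apply Finset.card_le_card_of_injOn (fun z => ((z + m - z₀) % m)/2)
    · intro z hz
      have hzI := Finset.mem_of_mem_erase hz
      have hzne : z ≠ z₀ := Finset.ne_of_mem_erase hz
      have hzm : z < m := hsub z hzI
      have hca := hadj z₀ hz₀ z hzI (fun h => hzne h.symm)
      set u := (z + m - z₀) % m with hu
      have huval : u = if z₀ ≤ z then z - z₀ else z + m - z₀ := by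
        rw [hu]
        split_ifs with h
        · have : z + m - z₀ = (z - z₀) + m := by omega
          rw [this, Nat.add_mod_right]
          exact Nat.mod_eq_of_lt (by omega)
        · exact Nat.mod_eq_of_lt (by omega)
      -- u ≠ 0, 1, m-1
      have hu0 : u ≠ 0 := by rw [huval]; split_ifs <;> omega
      have hu1 : u ≠ 1 := by
        intro h1
        apply hca.2
        unfold cyc
        rw [huval] at h1
        split_ifs at h1 <;> omega
      have hum : u ≠ m - 1 := by
        intro h1
        apply hca.2
        unfold cyc
        rw [huval] at h1
        split_ifs at h1 <;> omega
      have hult : u < m := Nat.mod_lt _ (by omega)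
      simp only [Finset.mem_coe, Finset.mem_Icc]
      constructor
      · omega
      · omega
    · intro z hz z' hz' heq
      have hzI := Finset.mem_of_mem_erase hz
      have hz'I := Finset.mem_of_mem_erase hz'
      have hzm : z < m := hsub z hzI
      have hz'm : z' < m := hsub z' hz'I
      set u := (z + m - z₀) % m with hu
      set u' := (z' + m - z₀) % m with hu'
      have huval : u = if z₀ ≤ z then z - z₀ else z + m - z₀ := by
        rw [hu]; split_ifs with h
        · have : z + m - z₀ = (z - z₀) + m := by omega
          rw [this, Nat.add_mod_right]; exact Nat.mod_eq_of_lt (by omega)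
        · exact Nat.mod_eq_of_lt (by omega)
      have hu'val : u' = if z₀ ≤ z' then z' - z₀ else z' + m - z₀ := by
        rw [hu']; split_ifs with h
        · have : z' + m - z₀ = (z' - z₀) + m := by omega
          rw [this, Nat.add_mod_right]; exact Nat.mod_eq_of_lt (by omega)
        · exact Nat.mod_eq_of_lt (by omega)
      by_contra hne
      have hca := hadj z hzI z' hz'I hne
      have hdiv : u / 2 = u' / 2 := heq
      unfold coreAdj cyc at hca
      rw [huval] at hdiv
      rw [hu'val] at hdiv
      split_ifs at hdiv <;> omega
  have := Finset.card_erase_of_mem hz₀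
  omega




lemma linarith_aux (X Y e t g : ℕ) (h : t ≤ Y) (hg : g < t) :
    X + e + Y - g = e + t - g + (X + (Y - t)) := by omega

lemma rot_mod {t c g z : ℕ} (ht : 0 < t) (hc : 1 ≤ c) (hg : g < t) (hz : z < c*t) :
    ((z + c*t - g) % (c*t)) % t = (z % t + t - g) % t := by
  have hdvd : t ∣ c*t := dvd_mul_left t c
  rw [Nat.mod_mod_of_dvd _ hdvd]
  have he : z % t < t := Nat.mod_lt _ ht
  have hle : t ≤ c*t := Nat.le_mul_of_pos_left t hc
  have key : z + c*t - g = (z % t + t - g) + (t*(z/t) + (c*t - t)) := by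
    have h1 : t * (z/t) + z % t = z := Nat.div_add_mod z t
    omega
  rw [key]
  have h2 : c*t - t = t*(c-1) := by
    obtain ⟨c', rfl⟩ : ∃ c', c = c'+1 := ⟨c-1, by omega⟩
    simp [Nat.add_mul, Nat.mul_add, Nat.mul_comm]
  rw [h2, ← Nat.add_assoc, Nat.add_mul_mod_self_left, Nat.add_mul_mod_self_left]

lemma rot_inv' {m g z : ℕ} (hm : 0 < m) (hg : g ≤ m) (hz : z < m) :
    ((z + m - g) % m + g) % m = z := by
  have h1 : (z + m - g) % m + g ≡ (z + m - g) + g [MOD m] :=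
    Nat.ModEq.add_right g (Nat.mod_modEq _ _)
  have h3 : (z + m - g) % m + g ≡ z [MOD m] := by
    calc (z + m - g) % m + g ≡ (z + m - g) + g [MOD m] := h1
    _ = z + m := by omega
    _ ≡ z + 0 [MOD m] := Nat.ModEq.add_left z (Nat.modEq_zero_iff_dvd.2 dvd_rfl)
    _ = z := by omega
  calc ((z + m - g) % m + g) % m = z % m := h3
  _ = z := Nat.mod_eq_of_lt hz

lemma count2 {c w g : ℕ} (hw : 1 ≤ w) (hc : 1 ≤ c) (hg : g < 2*w+1) (I : Finset ℕ)
    (hsub : ∀ z ∈ I, z < c*(2*w+1)) (hres : ∀ z ∈ I, z % (2*w+1) ≠ g)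
    (hadj : ∀ z ∈ I, ∀ z' ∈ I, z ≠ z' → coreAdj (c*(2*w+1)) z z') : I.card ≤ c*w := by
  classical
  set t := 2*w+1 with hT
  set m := c*t with hM
  have ht : 0 < t := by omega
  have hletm : t ≤ m := Nat.le_mul_of_pos_left t hc
  have hm : 3 ≤ m := by omega
  -- facts about the rotated coordinate
  have hufacts : ∀ z ∈ I, 1 ≤ (z + m - g) % m ∧ (z + m - g) % m < m ∧
      ((z + m - g) % m) % t ≠ 0 := by
    intro z hz
    have hzm : z < m := hsub z hz
    have hzr : z % t ≠ g := hres z hz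
    have hlt : (z + m - g) % m < m := Nat.mod_lt _ (by omega)
    have hres2 : ((z + m - g) % m) % t = (z % t + t - g) % t := rot_mod ht hc hg hzm
    have hzt : z % t < t := Nat.mod_lt _ ht
    have hval : (z % t + t - g) % t = if z % t + t - g < t then z % t + t - g
        else z % t + t - g - t := mod_lt_two_mul (by omega)
    have hne0 : ((z + m - g) % m) % t ≠ 0 := by
      rw [hres2, hval]; split_ifs <;> omega
    refine ⟨?_, hlt, hne0⟩
    by_contra h0
    push_neg at h0
    have h0' : (z + m - g) % m = 0 := by omega
    rw [h0'] at hne0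
    exact hne0 (Nat.zero_mod t)
  have hcard : I.card ≤ ((Finset.range c) ×ˢ (Finset.range w)).card := by
    apply Finset.card_le_card_of_injOn
      (fun z => (((z + m - g) % m) / t, ((((z + m - g) % m) % t) - 1) / 2))
    · intro z hz
      obtain ⟨h1, h2, h3⟩ := hufacts z hz
      simp only [Finset.mem_coe, Finset.mem_product, Finset.mem_range]
      constructor
      · exact Nat.div_lt_of_lt_mul (by rw [Nat.mul_comm]; exact h2)
      · have : ((z + m - g) % m) % t < t := Nat.mod_lt _ ht
        omega
    · intro z hz z' hz' heq
      obtain ⟨h1, h2, h3⟩ := hufacts z hz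
      obtain ⟨h1', h2', h3'⟩ := hufacts z' hz'
      have hzm : z < m := hsub z hz
      have hz'm : z' < m := hsub z' hz'
      set u := (z + m - g) % m with hu
      set u' := (z' + m - g) % m with hu'
      have hdiv : u / t = u' / t := congrArg Prod.fst heq
      have hdiv2 : (u % t - 1) / 2 = (u' % t - 1) / 2 := congrArg Prod.snd heq
      have het : u % t < t := Nat.mod_lt _ ht
      have het' : u' % t < t := Nat.mod_lt _ ht
      have hQ : t * (u / t) = t * (u' / t) := by rw [hdiv]
      have heq1 : t * (u / t) + u % t = u := Nat.div_add_mod u t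
      have heq2 : t * (u' / t) + u' % t = u' := Nat.div_add_mod u' t
      have hnear : u = u' ∨ u' = u + 1 ∨ u = u' + 1 := by omega
      have hzz : (u + g) % m = z := rot_inv' (by omega) (by omega) hzm
      have hzz' : (u' + g) % m = z' := rot_inv' (by omega) (by omega) hz'm
      rcases hnear with hcase | hcase | hcase
      · rw [← hzz, ← hzz', hcase]
      · exfalso
        have hne : z ≠ z' := by
          intro h
          have : u = u' := by rw [hu, hu', h]
          omega
        have hz'succ : z' = (z + 1) % m := by
          rw [← hzz', hcase]
          have : u + 1 + g = u + g + 1 := by omega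
          rw [this, ← succ_mod_shift (show 2 ≤ m by omega), hzz]
        exact (hadj z hz z' hz' hne).2 (hz'succ ▸ cyc_of_succ (by omega) hzm)
      · exfalso
        have hne : z' ≠ z := by
          intro h
          have : u = u' := by rw [hu, hu', h]
          omega
        have hzsucc : z = (z' + 1) % m := by
          rw [← hzz, hcase]
          have : u' + 1 + g = u' + g + 1 := by omega
          rw [this, ← succ_mod_shift (show 2 ≤ m by omega), hzz']
        exact (hadj z' hz' z hz hne).2 (hzsucc ▸ cyc_of_succ (by omega) hz'm)
  rw [Finset.card_product] at hcard
  simpa using hcard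


lemma coreAdj_picks {m g u₁ u₂ : ℕ} (hm : 3 ≤ m) (hg : g < m)
    (h1 : u₁ + 2 ≤ u₂) (h2 : u₂ ≤ u₁ + (m - 2)) (hu1 : u₁ < m) (hu2 : u₂ < m) :
    coreAdj m ((g+u₁)%m) ((g+u₂)%m) := by
  have e1 : (g+u₁)%m = if g+u₁ < m then g+u₁ else g+u₁ - m := mod_lt_two_mul (by omega)
  have e2 : (g+u₂)%m = if g+u₂ < m then g+u₂ else g+u₂ - m := mod_lt_two_mul (by omega)
  unfold coreAdj cyc
  rw [e1, e2]
  split_ifs <;> constructor <;> omega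

lemma pick_res_ne {t c z u : ℕ} (ht : 1 ≤ t) (hu : u % t ≠ 0) :
    ((z + u) % (c*t)) % t ≠ z % t := by
  rw [Nat.mod_mod_of_dvd _ (dvd_mul_left t c), Nat.add_mod]
  have he : z % t < t := Nat.mod_lt _ (by omega)
  have hd : u % t < t := Nat.mod_lt _ (by omega)
  have h1 : (z % t + u % t) % t = if z % t + u % t < t then z % t + u % t
      else z % t + u % t - t := mod_lt_two_mul (by omega)
  rw [h1]; split_ifs <;> omega

lemma pick_res_ne2 {t c g h u : ℕ} (ht : 1 ≤ t) (hg : g < t) (hh : h < t)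
    (hu : u % t ≠ (h + t - g) % t) : ((g + u) % (c*t)) % t ≠ h := by
  rw [Nat.mod_mod_of_dvd _ (dvd_mul_left t c), Nat.add_mod]
  rw [Nat.mod_eq_of_lt hg]
  have hd : u % t < t := Nat.mod_lt _ (by omega)
  have h1 : (g + u % t) % t = if g + u % t < t then g + u % t
      else g + u % t - t := mod_lt_two_mul (by omega)
  have h2 : (h + t - g) % t = if h + t - g < t then h + t - g
      else h + t - g - t := mod_lt_two_mul (by omega)
  rw [h2] at hu
  rw [h1]
  split_ifs at hu ⊢ <;> omega

/-! pick functions -/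

def f1 (w ℓ : ℕ) : ℕ := (2*w+1) * (ℓ / w) + 2*(ℓ % w) + 1

lemma f1_eval {w : ℕ} (q e : ℕ) (hw : 1 ≤ w) (he : e < w) :
    f1 w (w*q+e) = (2*w+1)*q + 2*e + 1 := by
  unfold f1
  rw [Nat.mul_add_div (by omega), Nat.div_eq_of_lt he, Nat.mul_add_mod,
    Nat.mod_eq_of_lt he]
  ring

lemma ell_decomp (w ℓ : ℕ) : ∃ q e, ℓ = w*q + e ∧ (1 ≤ w → e < w) ∧ q = ℓ/w ∧ e = ℓ%w :=
  ⟨ℓ/w, ℓ%w, (Nat.div_add_mod ℓ w).symm, fun hw => Nat.mod_lt _ (by omega), rfl, rfl⟩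

lemma f1_step {w : ℕ} (hw : 1 ≤ w) (ℓ : ℕ) :
    f1 w ℓ + 2 ≤ f1 w (ℓ+1) ∧ f1 w (ℓ+1) ≤ f1 w ℓ + 3 := by
  obtain ⟨q, e, rfl, he, -, -⟩ := ell_decomp w ℓ
  have he' := he hw
  rcases Nat.lt_or_ge (e+1) w with h | h
  · rw [f1_eval q e hw he', show w*q+e+1 = w*q+(e+1) by omega, f1_eval q (e+1) hw h]
    omega
  · have he1 : e + 1 = w := by omega
    rw [f1_eval q e hw he', show w*q+e+1 = w*(q+1)+0 by rw [Nat.mul_succ]; omega,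
      f1_eval (q+1) 0 hw (by omega), Nat.mul_succ]
    omega

lemma f1_zero {w : ℕ} : f1 w 0 = 1 := by simp [f1]

lemma f1_mod {w : ℕ} (hw : 1 ≤ w) (ℓ : ℕ) : f1 w ℓ % (2*w+1) = 2*(ℓ%w) + 1 := by
  obtain ⟨q, e, rfl, he, hq, hee⟩ := ell_decomp w ℓ
  have he' := he hw
  have hmod : (w*q+e) % w = e := by rw [Nat.mul_add_mod, Nat.mod_eq_of_lt he']
  rw [f1_eval q e hw he', hmod, show (2*w+1)*q + 2*e + 1 = (2*w+1)*q + (2*e+1) by omega,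
    Nat.mul_add_mod, Nat.mod_eq_of_lt (by omega)]

lemma f1_le {c w : ℕ} (hw : 1 ≤ w) (hc : 1 ≤ c) {ℓ : ℕ} (hl : ℓ < c*w) :
    f1 w ℓ ≤ c*(2*w+1) - 2 := by
  obtain ⟨q, e, rfl, he, -, -⟩ := ell_decomp w ℓ
  have he' := he hw
  have hcw : c*w = w*c := Nat.mul_comm c w
  have hq : q + 1 ≤ c := by
    by_contra hq
    push_neg at hq
    have : w * c ≤ w * q := Nat.mul_le_mul_left w (by omega)
    omega
  have h1 : (2*w+1)*q + (2*w+1) ≤ (2*w+1)*c := by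
    calc (2*w+1)*q + (2*w+1) = (2*w+1)*(q+1) := by ring
    _ ≤ (2*w+1)*c := Nat.mul_le_mul_left _ hq
  rw [f1_eval q e hw he']
  have : c*(2*w+1) = (2*w+1)*c := Nat.mul_comm _ _
  omega

lemma f1_le4 {c w : ℕ} (hw : 1 ≤ w) (hc : 1 ≤ c) {ℓ : ℕ} (hl : ℓ + 1 < c*w) :
    f1 w ℓ ≤ c*(2*w+1) - 4 := by
  obtain ⟨q, e, rfl, he, -, -⟩ := ell_decomp w ℓ
  have he' := he hw
  have hcm : c*(2*w+1) = (2*w+1)*c := Nat.mul_comm _ _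
  have hcw : c*w = w*c := Nat.mul_comm c w
  rw [f1_eval q e hw he']
  by_cases hq : q + 1 = c
  · have hwq : w*q + w = w*c := by rw [← hq]; ring
    have hew : e + 2 ≤ w := by omega
    have h1 : (2*w+1)*q + (2*w+1) = (2*w+1)*c := by rw [← hq]; ring
    omega
  · have hq2 : q + 2 ≤ c := by
      by_contra hq2
      push_neg at hq2
      have hqc : c ≤ q := by omega
      have : w * c ≤ w * q := Nat.mul_le_mul_left w hqc
      omega
    have h1 : (2*w+1)*q + 2*(2*w+1) ≤ (2*w+1)*c := by
      calc (2*w+1)*q + 2*(2*w+1) = (2*w+1)*(q+2) := by ring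
      _ ≤ (2*w+1)*c := Nat.mul_le_mul_left _ hq2
    omega

def f3 (w ℓ : ℕ) : ℕ := if ℓ < w then 2*ℓ+2 else f1 w ℓ

lemma f3_step {w : ℕ} (hw : 1 ≤ w) (ℓ : ℕ) :
    f3 w ℓ + 2 ≤ f3 w (ℓ+1) ∧ f3 w (ℓ+1) ≤ f3 w ℓ + 3 := by
  unfold f3
  split_ifs with h1 h2 h2
  · omega
  · have hl : ℓ + 1 = w := by omega
    have : f1 w (ℓ+1) = (2*w+1) + 2*0 + 1 := by
      rw [show ℓ+1 = w*1+0 by omega, f1_eval 1 0 hw (by omega)]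
      omega
    omega
  · omega
  · exact f1_step hw ℓ

lemma f3_mod {w : ℕ} (hw : 1 ≤ w) (ℓ : ℕ) :
    1 ≤ f3 w ℓ % (2*w+1) ∧ f3 w ℓ % (2*w+1) ≤ 2*w := by
  unfold f3
  split_ifs with h
  · rw [Nat.mod_eq_of_lt (by omega)]; omega
  · rw [f1_mod hw ℓ]
    have : ℓ % w < w := Nat.mod_lt _ (by omega)
    omega

lemma f3_bounds {c w : ℕ} (hw : 1 ≤ w) (hc : 2 ≤ c) {ℓ : ℕ} (hl : ℓ < c*w) :
    2 ≤ f3 w ℓ ∧ f3 w ℓ ≤ c*(2*w+1) - 2 := by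
  unfold f3
  split_ifs with h
  · have h2 : 2*(2*w+1) ≤ c*(2*w+1) := Nat.mul_le_mul_right _ hc
    omega
  · constructor
    · have hq1 : 1 ≤ ℓ/w := (Nat.le_div_iff_mul_le (by omega)).2 (by omega)
      have h3 : (2*w+1)*1 ≤ (2*w+1)*(ℓ/w) := Nat.mul_le_mul_left _ hq1
      unfold f1
      omega
    · exact f1_le hw (by omega) hl

def pk (e₀ ℓ' : ℕ) : ℕ := 2*ℓ'+1 + (if e₀ ≤ 2*ℓ'+1 then e₀ % 2 else 0)

def f2 (w e₀ ℓ : ℕ) : ℕ := (2*w+1)*(ℓ/w) + pk e₀ (ℓ%w)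

lemma pk_facts {w e₀ : ℕ} (he₀ : 1 ≤ e₀ ∧ e₀ ≤ 2*w) {ℓ' : ℕ} (hl : ℓ' < w) :
    1 ≤ pk e₀ ℓ' ∧ pk e₀ ℓ' ≤ 2*w ∧ pk e₀ ℓ' ≠ e₀ ∧ pk e₀ ℓ' + 2 ≤ pk e₀ (ℓ'+1) := by
  unfold pk
  split_ifs <;> omega

lemma f2_eval {w : ℕ} (q e : ℕ) (e₀ : ℕ) (hw : 1 ≤ w) (he : e < w) :
    f2 w e₀ (w*q+e) = (2*w+1)*q + pk e₀ e := by
  unfold f2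
  rw [Nat.mul_add_div (by omega), Nat.div_eq_of_lt he, Nat.mul_add_mod,
    Nat.mod_eq_of_lt he]
  ring

lemma f2_step {w e₀ : ℕ} (hw : 1 ≤ w) (he₀ : 1 ≤ e₀ ∧ e₀ ≤ 2*w) (ℓ : ℕ) :
    f2 w e₀ ℓ + 2 ≤ f2 w e₀ (ℓ+1) := by
  obtain ⟨q, e, rfl, he, -, -⟩ := ell_decomp w ℓ
  have he' := he hw
  rcases Nat.lt_or_ge (e+1) w with h | h
  · rw [f2_eval q e e₀ hw he', show w*q+e+1 = w*q+(e+1) by omega, f2_eval q (e+1) e₀ hw h]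
    have := (pk_facts he₀ he').2.2.2
    omega
  · have he1 : e + 1 = w := by omega
    rw [f2_eval q e e₀ hw he', show w*q+e+1 = w*(q+1)+0 by rw [Nat.mul_succ]; omega,
      f2_eval (q+1) 0 e₀ hw (by omega), Nat.mul_succ]
    have h1 := (pk_facts he₀ he').2.1
    have h2 := (pk_facts he₀ (show 0 < w by omega)).1
    omega

lemma f2_facts {c w e₀ : ℕ} (hw : 1 ≤ w) (hc : 1 ≤ c) (he₀ : 1 ≤ e₀ ∧ e₀ ≤ 2*w)
    {ℓ : ℕ} (hl : ℓ < c*w) :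
    1 ≤ f2 w e₀ ℓ ∧ f2 w e₀ ℓ ≤ c*(2*w+1) - 1 ∧
    f2 w e₀ ℓ % (2*w+1) = pk e₀ (ℓ%w) := by
  obtain ⟨q, e, rfl, he, -, hee⟩ := ell_decomp w ℓ
  have he' := he hw
  have hpk := pk_facts he₀ he'
  have hcw : c*w = w*c := Nat.mul_comm c w
  have hq : q + 1 ≤ c := by
    by_contra hq
    push_neg at hq
    have : w * c ≤ w * q := Nat.mul_le_mul_left w (by omega)
    omega
  have h1 : (2*w+1)*q + (2*w+1) ≤ (2*w+1)*c := by
    calc (2*w+1)*q + (2*w+1) = (2*w+1)*(q+1) := by ring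
    _ ≤ (2*w+1)*c := Nat.mul_le_mul_left _ hq
  have hcm : c*(2*w+1) = (2*w+1)*c := Nat.mul_comm _ _
  have heq : (w*q+e) % w = e := by
    rw [Nat.mul_add_mod, Nat.mod_eq_of_lt he']
  rw [f2_eval q e e₀ hw he', heq]
  refine ⟨by omega, by omega, ?_⟩
  rw [Nat.mul_add_mod]
  exact Nat.mod_eq_of_lt (by omega)



section bits

def tt (w : ℕ) : ℕ := 2*w+1
def mm (c w : ℕ) : ℕ := c * tt w
def gam (c w i : ℕ) : ℕ := if i < mm c w then i % tt w else 0

def adjN (k c w a b : ℕ) : Prop :=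
  (a < k ∧ k ≤ b ∧ (b - k) % tt w ≠ gam c w a) ∨
  (b < k ∧ k ≤ a ∧ (a - k) % tt w ≠ gam c w b) ∨
  (k ≤ a ∧ k ≤ b ∧ coreAdj (mm c w) (a - k) (b - k))

def GG (k c w : ℕ) : SimpleGraph (Fin (k + mm c w)) where
  Adj u v := adjN k c w u.val v.val
  symm := by
    constructor
    intro u v h
    unfold adjN coreAdj cyc at *
    tauto
  loopless := by
    constructor
    intro u h
    unfold adjN coreAdj at h
    rcases h with ⟨h1,h2,_⟩|⟨h1,h2,_⟩|⟨_,_,h3,_⟩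
    · omega
    · omega
    · exact h3 rfl

lemma gam_lt {c w : ℕ} (i : ℕ) : gam c w i < tt w := by
  unfold gam
  split_ifs
  · exact Nat.mod_lt _ (by unfold tt; omega)
  · unfold tt; omega
end bits


lemma count_res {c t g : ℕ} (ht : 0 < t) (hg : g < t) :
    ((Finset.range (c*t)).filter (fun z => z % t = g)).card = c := by
  classical
  have himg : ((Finset.range (c*t)).filter (fun z => z % t = g)) =
      (Finset.range c).image (fun j => g + j*t) := by
    ext z
    simp only [Finset.mem_filter, Finset.mem_range, Finset.mem_image]
    constructor
    · rintro ⟨hz, hzg⟩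
      refine ⟨z/t, ?_, ?_⟩
      · exact Nat.div_lt_of_lt_mul (by rw [Nat.mul_comm]; exact hz)
      · have h1 := Nat.div_add_mod z t
        have h2 : (z/t)*t = t*(z/t) := Nat.mul_comm _ _
        omega
    · rintro ⟨j, hj, rfl⟩
      constructor
      · have h1 : j + 1 ≤ c := hj
        have h2 : t*(j+1) ≤ t*c := Nat.mul_le_mul_left _ h1
        have h3 : t*(j+1) = j*t + t := by ring
        have h4 : c*t = t*c := Nat.mul_comm _ _
        omega
      · rw [Nat.add_mul_mod_self_right]
        exact Nat.mod_eq_of_lt hg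
  rw [himg, Finset.card_image_of_injective _ (fun a b hab => by
    have : a * t = b * t := by omega
    exact Nat.eq_of_mul_eq_mul_right ht this)]
  exact Finset.card_range c


lemma GG_nadj_xx {k c w i j : ℕ} (hi : i < k) (hj : j < k)
    {h1 : i < k + mm c w} {h2 : j < k + mm c w} :
    ¬ (GG k c w).Adj ⟨i, h1⟩ ⟨j, h2⟩ := by
  intro h
  have : adjN k c w i j := h
  rcases this with ⟨a1,a2,-⟩|⟨a1,a2,-⟩|⟨a1,-⟩ <;> omega

lemma GG_adj_xc {k c w i z : ℕ} (hi : i < k) (hz : z < mm c w)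
    {h1 : i < k + mm c w} {h2 : k + z < k + mm c w} :
    (GG k c w).Adj ⟨i, h1⟩ ⟨k+z, h2⟩ ↔ z % tt w ≠ gam c w i := by
  show adjN k c w i (k+z) ↔ _
  unfold adjN
  rw [Nat.add_sub_cancel_left]
  constructor
  · rintro (⟨-,-,h⟩|⟨h,-,-⟩|⟨h,-,-⟩)
    · exact h
    · omega
    · omega
  · intro h
    exact Or.inl ⟨hi, by omega, h⟩

lemma GG_adj_cc {k c w z z' : ℕ} (hz : z < mm c w) (hz' : z' < mm c w)
    {h1 : k + z < k + mm c w} {h2 : k + z' < k + mm c w} :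
    (GG k c w).Adj ⟨k+z, h1⟩ ⟨k+z', h2⟩ ↔ coreAdj (mm c w) z z' := by
  show adjN k c w (k+z) (k+z') ↔ _
  unfold adjN
  rw [Nat.add_sub_cancel_left, Nat.add_sub_cancel_left]
  constructor
  · rintro (⟨h,-,-⟩|⟨h,-,-⟩|⟨-,-,h⟩)
    · omega
    · omega
    · exact h
  · intro h
    exact Or.inr (Or.inr ⟨by omega, by omega, h⟩)

lemma GG_nadj_xx' {k c w : ℕ} {u v : Fin (k + mm c w)} (hu : u.val < k) (hv : v.val < k) :
    ¬ (GG k c w).Adj u v := by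
  intro h
  have h' : adjN k c w u.val v.val := h
  rcases h' with ⟨a1,a2,-⟩|⟨a1,a2,-⟩|⟨a1,-⟩ <;> omega

lemma GG_adj_xc' {k c w : ℕ} {u v : Fin (k + mm c w)} (hu : u.val < k) (hv : k ≤ v.val) :
    (GG k c w).Adj u v ↔ (v.val - k) % tt w ≠ gam c w u.val := by
  constructor
  · intro h
    have h' : adjN k c w u.val v.val := h
    rcases h' with ⟨-,-,h3⟩|⟨h1,-,-⟩|⟨h1,-,-⟩
    · exact h3
    · omega
    · omega
  · intro h
    exact Or.inl ⟨hu, hv, h⟩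

lemma GG_adj_cc' {k c w : ℕ} {u v : Fin (k + mm c w)} (hu : k ≤ u.val) (hv : k ≤ v.val) :
    (GG k c w).Adj u v ↔ coreAdj (mm c w) (u.val - k) (v.val - k) := by
  constructor
  · intro h
    have h' : adjN k c w u.val v.val := h
    rcases h' with ⟨h1,-,-⟩|⟨h1,-,-⟩|⟨-,-,h3⟩
    · omega
    · omega
    · exact h3
  · intro h
    exact Or.inr (Or.inr ⟨hu, hv, h⟩)

def PP (k c w : ℕ) (hmk : mm c w ≤ k) : Fin (k + mm c w) → Fin k := fun v =>
  if h : v.val < k then ⟨v.val, h⟩ else ⟨v.val - k, by have := v.isLt; omega⟩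

def xx (k c w : ℕ) : Fin k → Fin (k + mm c w) := fun i => ⟨i.val, by have := i.isLt; omega⟩

lemma PP_x {k c w : ℕ} (hmk : mm c w ≤ k) (i : Fin k) : PP k c w hmk (xx k c w i) = i := by
  unfold PP xx
  simp [i.isLt]

lemma PP_val {k c w : ℕ} (hmk : mm c w ≤ k) (v : Fin (k + mm c w)) :
    (PP k c w hmk v).val = if v.val < k then v.val else v.val - k := by
  unfold PP
  split_ifs <;> rfl

lemma GG_proper {k c w : ℕ} (hmk : mm c w ≤ k) :
    ∀ u v, (GG k c w).Adj u v → PP k c w hmk u ≠ PP k c w hmk v := by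
  intro u v h heq
  have h' : adjN k c w u.val v.val := h
  have hval : (PP k c w hmk u).val = (PP k c w hmk v).val := by rw [heq]
  rw [PP_val, PP_val] at hval
  have hui := u.isLt
  have hvi := v.isLt
  rcases h' with ⟨a1,a2,a3⟩|⟨a1,a2,a3⟩|⟨a1,a2,a3⟩
  · rw [if_pos a1, if_neg (by omega)] at hval
    unfold gam at a3
    rw [if_pos (by omega)] at a3
    rw [← hval] at a3
    omega
  · rw [if_neg (by omega), if_pos a1] at hval
    unfold gam at a3
    rw [if_pos (by omega)] at a3
    rw [hval] at a3
    omega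
  · rw [if_neg (by omega), if_neg (by omega)] at hval
    exact a3.1 (by omega)

lemma res_shift_ne {t a d : ℕ} (ht : 1 ≤ t) (hd : d % t ≠ 0) : (a + d) % t ≠ a % t := by
  rw [Nat.add_mod]
  have h1 : a % t < t := Nat.mod_lt _ (by omega)
  have h2 : d % t < t := Nat.mod_lt _ (by omega)
  have h3 : (a % t + d % t) % t = if a % t + d % t < t then a % t + d % t
      else a % t + d % t - t := mod_lt_two_mul (by omega)
  rw [h3]
  split_ifs <;> omega



lemma hajnal {V : Type} [DecidableEq V] (G : SimpleGraph V) (s : ℕ) (N : Finset V)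
    (hmax : ∀ D : Finset V, G.IsClique ↑D → D ⊆ N → D.card ≤ s) :
    ∀ (F : Finset (Finset V)) (hne : F.Nonempty),
      (∀ C ∈ F, G.IsClique ↑C ∧ C.card = s ∧ C ⊆ N) →
      2*s ≤ (F.sup id).card + (F.inf' hne id).card := by
  intro F
  induction F using Finset.cons_induction with
  | empty => intro hne; exact absurd hne (by simp)
  | cons D F' hD ih =>
    intro hne hprops
    rcases Finset.eq_empty_or_nonempty F' with hF' | hs
    · subst hF'
      obtain ⟨-, hca, -⟩ := hprops D (by simp)
      have h1 : (Finset.cons D ∅ hD).sup id = D := by simp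
      have h2 : (Finset.cons D ∅ hD).inf' hne id = D := by
        simp [Finset.inf'_cons]
      rw [h1, h2]; omega
    · have ihh := ih hs (fun C hC => hprops C (by simp [hC]))
      set A := F'.inf' hs id with hA
      set U := F'.sup id with hU
      obtain ⟨hclD, hcaD, hsubD⟩ := hprops D (by simp)
      obtain ⟨C₀, hC₀⟩ := hs
      have hAC₀ : A ⊆ C₀ := Finset.inf'_le (f := id) (h := hC₀)
      obtain ⟨hclC₀, -, hsubC₀⟩ := hprops C₀ (by simp [hC₀])
      have hclA : G.IsClique ↑A := hclC₀.subset (by exact_mod_cast hAC₀)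
      classical
      set X := D.filter (fun d => ∃ a ∈ A, a ∉ D ∧ ¬G.Adj d a) with hX
      set Dstar := (D \ X) ∪ (A \ D) with hDstar
      have hdisj : Disjoint (D \ X) (A \ D) := by
        rw [Finset.disjoint_left]
        intro x hx hx'
        exact (Finset.mem_sdiff.1 hx').2 (Finset.mem_sdiff.1 hx).1
      have hclDstar : G.IsClique ↑Dstar := by
        intro x hx y hy hxy
        simp only [hDstar, Finset.coe_union, Set.mem_union, Finset.coe_sdiff,
          Set.mem_diff, Finset.mem_coe] at hx hy
        rcases hx with ⟨hxD, hxX⟩ | ⟨hxA, hxD⟩ <;>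
          rcases hy with ⟨hyD, hyX⟩ | ⟨hyA, hyD⟩
        · exact hclD hxD hyD hxy
        · by_contra hnadj
          exact hxX (Finset.mem_filter.2 ⟨hxD, y, hyA, hyD, hnadj⟩)
        · by_contra hnadj
          exact hyX (Finset.mem_filter.2 ⟨hyD, x, hxA, hxD, fun h => hnadj h.symm⟩)
        · exact hclA hxA hyA hxy
      have hsubDstar : Dstar ⊆ N := by
        intro x hx
        rcases Finset.mem_union.1 hx with h | h
        · exact hsubD (Finset.mem_sdiff.1 h).1
        · exact hsubC₀ (hAC₀ (Finset.mem_sdiff.1 h).1)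
      have hcardDstar := hmax Dstar hclDstar hsubDstar
      have h1 : Dstar.card = (D \ X).card + (A \ D).card := Finset.card_union_of_disjoint hdisj
      have h2 : (D \ X).card = D.card - X.card := Finset.card_sdiff_of_subset (Finset.filter_subset _ _)
      have hXD : X ⊆ D := Finset.filter_subset _ _
      have hXcard : X.card ≤ D.card := Finset.card_le_card hXD
      have hXU : X ⊆ D \ U := by
        intro x hx
        obtain ⟨hxD, a, haA, haD, hnadj⟩ := Finset.mem_filter.1 hx
        refine Finset.mem_sdiff.2 ⟨hxD, fun hxU => ?_⟩
        obtain ⟨C, hCF, hxC⟩ := Finset.mem_sup.1 hxU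
        have haC : a ∈ C := (Finset.inf'_le (f := id) (h := hCF) : A ⊆ C) haA
        obtain ⟨hclC, -, -⟩ := hprops C (by simp [hCF])
        have hax : a ≠ x := fun h => haD (h ▸ hxD)
        exact hnadj ((hclC hxC haC (fun h => hax h.symm)))
      have hXU' : X.card ≤ (D \ U).card := Finset.card_le_card hXU
      have h3 : (D \ U).card + U.card = (D ∪ U).card := Finset.card_sdiff_add_card D U
      have h4 : (A ∩ D).card + (A \ D).card = A.card := Finset.card_inter_add_card_sdiff A D
      have hgoal1 : ((Finset.cons D F' hD).sup id) = D ∪ U := by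
        rw [Finset.sup_cons]; rfl
      have hgoal2 : ((Finset.cons D F' hD).inf' hne id) = D ∩ A := by
        rw [Finset.inf'_cons ⟨C₀, hC₀⟩]; rfl
      rw [hgoal1, hgoal2]
      have h5 : (D ∩ A).card = (A ∩ D).card := by rw [Finset.inter_comm]
      omega




lemma witness_lower (k r : ℕ) (hr : 3 ≤ r) (hk : 3 ≤ k) {M : ℕ}
    (hW : AlphaWitness k r M) : k * (2*r - 4) ≤ M := by
  classical
  obtain ⟨n, G, P, x, ⟨hprop, hfree, hsat⟩, hPx, hind, hM⟩ := hW
  have key : ∀ i : Fin k, 2*(r-2) ≤ (G.neighborSet (x i)).ncard := by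
    intro i
    set NS := G.neighborSet (x i) with hNS
    have hfin : NS.Finite := Set.toFinite _
    set NF := hfin.toFinset with hNF
    have hmemNF : ∀ w, w ∈ NF ↔ G.Adj (x i) w := by
      intro w; rw [hNF, Set.Finite.mem_toFinset]; rfl
    -- extract cliques from saturation
    have hcl : ∀ j : Fin k, ∃ C : Finset (Fin n), j ≠ i →
        G.IsClique ↑C ∧ C.card = r - 2 ∧ ∀ w ∈ C, G.Adj (x i) w ∧ G.Adj (x j) w := by
      intro j
      by_cases hji : j ≠ i
      swap
      · exact ⟨∅, fun h => absurd h hji⟩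
      have hPij : P (x i) ≠ P (x j) := by
        rw [hPx, hPx]; exact fun h => hji (h.symm)
      have hnadj : ¬ G.Adj (x i) (x j) := hind i j
      have hnc := hsat (x i) (x j) hPij hnadj
      rw [SimpleGraph.CliqueFree] at hnc; push_neg at hnc
      obtain ⟨T, hT⟩ := hnc
      set G' := G ⊔ SimpleGraph.fromEdgeSet {s(x i, x j)} with hG'
      have hadj' : ∀ u v, G'.Adj u v ↔ G.Adj u v ∨ (s(u,v) = s(x i, x j) ∧ u ≠ v) := by
        intro u v
        rw [hG', SimpleGraph.sup_adj, SimpleGraph.fromEdgeSet_adj]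
        simp
      have hxiT : x i ∈ T ∧ x j ∈ T := by
        by_contra hcon
        have : G.IsNClique r T := by
          refine ⟨fun u hu v hv huv => ?_, hT.2⟩
          have := hT.1 hu hv huv
          rw [hadj'] at this
          rcases this with h | ⟨he, -⟩
          · exact h
          · exfalso
            rcases Sym2.eq_iff.1 he with ⟨h1, h2⟩ | ⟨h1, h2⟩
            · exact hcon ⟨h1 ▸ hu, h2 ▸ hv⟩
            · exact hcon ⟨h2 ▸ hv, h1 ▸ hu⟩
        exact hfree T this
      obtain ⟨hxi, hxj⟩ := hxiT
      have hxij : x i ≠ x j := fun h => hPij (by rw [h])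
      set C := (T.erase (x i)).erase (x j) with hC
      have hmemC : ∀ w ∈ C, w ∈ T ∧ w ≠ x i ∧ w ≠ x j := by
        intro w hw
        have h1 := Finset.mem_erase.1 hw
        have h2 := Finset.mem_erase.1 h1.2
        exact ⟨h2.2, h2.1, h1.1⟩
      have hGadj : ∀ w ∈ C, G.Adj (x i) w ∧ G.Adj (x j) w := by
        intro w hw
        obtain ⟨hwT, hwi, hwj⟩ := hmemC w hw
        constructor
        · have := hT.1 hxi hwT (fun h => hwi h.symm)
          rw [hadj'] at this
          rcases this with h | ⟨he, -⟩
          · exact h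
          · exfalso
            rcases Sym2.eq_iff.1 he with ⟨-, h2⟩ | ⟨h1, -⟩
            · exact hwj h2
            · exact hxij h1
        · have := hT.1 hxj hwT (fun h => hwj h.symm)
          rw [hadj'] at this
          rcases this with h | ⟨he, -⟩
          · exact h
          · exfalso
            rcases Sym2.eq_iff.1 he with ⟨h1, -⟩ | ⟨-, h2⟩
            · exact hxij h1.symm
            · exact hwi h2
      refine ⟨C, fun _ => ⟨?_, ?_, hGadj⟩⟩
      · intro u hu v hv huv
        simp only [Finset.coe_erase, Set.mem_diff, Finset.mem_coe] at hu hv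
        obtain ⟨huT, hui, huj⟩ := hmemC u (by simpa [hC] using hu)
        obtain ⟨hvT, hvi, hvj⟩ := hmemC v (by simpa [hC] using hv)
        have := hT.1 huT hvT huv
        rw [hadj'] at this
        rcases this with h | ⟨he, -⟩
        · exact h
        · exfalso
          rcases Sym2.eq_iff.1 he with ⟨h1, -⟩ | ⟨h1, -⟩
          · exact hui h1
          · exact huj h1
      · have hjT : x j ∈ T.erase (x i) := Finset.mem_erase.2 ⟨fun h => hxij h.symm, hxj⟩
        rw [hC, Finset.card_erase_of_mem hjT, Finset.card_erase_of_mem hxi, hT.2]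
        omega
    choose Cl hCl using hcl
    -- the family
    set J : Finset (Fin k) := Finset.univ.erase i with hJ
    have hJne : J.Nonempty := by
      have : 1 < Fintype.card (Fin k) := by simp; omega
      have := Finset.card_erase_of_mem (Finset.mem_univ i)
      rw [← Finset.card_pos, hJ, this]
      simp at this ⊢
      omega
    set F : Finset (Finset (Fin n)) := J.image Cl with hF
    have hFne : F.Nonempty := hJne.image Cl
    have hprops : ∀ C ∈ F, G.IsClique ↑C ∧ C.card = r - 2 ∧ C ⊆ NF := by
      intro C hCmem
      obtain ⟨j, hj, rfl⟩ := Finset.mem_image.1 hCmem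
      have hji : j ≠ i := (Finset.mem_erase.1 hj).1
      obtain ⟨h1, h2, h3⟩ := hCl j hji
      exact ⟨h1, h2, fun w hw => (hmemNF w).2 (h3 w hw).1⟩
    have hmax : ∀ D : Finset (Fin n), G.IsClique ↑D → D ⊆ NF → D.card ≤ r - 2 := by
      intro D hclD hsubD
      by_contra hlt
      push_neg at hlt
      obtain ⟨D', hD'sub, hD'card⟩ := Finset.exists_subset_card_eq (by omega : r - 2 + 1 ≤ D.card)
      have hxiD' : x i ∉ D' := by
        intro hmem
        have := (hmemNF (x i)).1 (hsubD (hD'sub hmem))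
        exact G.irrefl this
      have : G.IsNClique r (insert (x i) D') := by
        constructor
        · intro u hu v hv huv
          simp only [Finset.coe_insert, Set.mem_insert_iff, Finset.mem_coe] at hu hv
          rcases hu with rfl | hu <;> rcases hv with rfl | hv
          · exact absurd rfl huv
          · exact (hmemNF v).1 (hsubD (hD'sub hv))
          · exact ((hmemNF u).1 (hsubD (hD'sub hu))).symm
          · exact hclD (hD'sub hu) (hD'sub hv) huv
        · rw [Finset.card_insert_of_notMem hxiD', hD'card]; omega
      exact hfree _ this
    have hhaj := hajnal G (r-2) NF hmax F hFne hprops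
    -- intersection is empty
    have hinf : (F.inf' hFne id) = ∅ := by
      by_contra hne
      obtain ⟨v, hv⟩ := Finset.nonempty_iff_ne_empty.2 hne
      have hvall : ∀ C ∈ F, v ∈ C := by
        intro C hCmem
        exact (Finset.inf'_le (f := id) (h := hCmem) : F.inf' hFne id ⊆ C) hv
      obtain ⟨C₀, hC₀⟩ := hFne
      have hvNF : v ∈ NF := (hprops C₀ hC₀).2.2 (hvall C₀ hC₀)
      have hvadj : G.Adj (x i) v := (hmemNF v).1 hvNF
      have hPvi : P v ≠ i := by
        have := hprop _ _ hvadj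
        rw [hPx] at this
        exact fun h => this (h.symm)
      have hPvJ : P v ∈ J := Finset.mem_erase.2 ⟨hPvi, Finset.mem_univ _⟩
      have hClPv : Cl (P v) ∈ F := Finset.mem_image_of_mem Cl hPvJ
      have hvCl : v ∈ Cl (P v) := hvall _ hClPv
      obtain ⟨-, -, h3⟩ := hCl (P v) hPvi
      have := hprop _ _ (h3 v hvCl).2
      rw [hPx] at this
      exact this rfl
    have hsup : (F.sup id) ⊆ NF := by
      intro w hw
      obtain ⟨C, hCF, hwC⟩ := Finset.mem_sup.1 hw
      exact (hprops C hCF).2.2 hwC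
    have hcard : (F.sup id).card ≤ NF.card := Finset.card_le_card hsup
    rw [hinf] at hhaj
    simp at hhaj
    have : NS.ncard = NF.card := Set.ncard_eq_toFinset_card _ hfin
    omega
  rw [hM]
  have : ∀ i : Fin k, 2*r - 4 ≤ (G.neighborSet (x i)).ncard := by
    intro i; have := key i; omega
  calc k * (2*r-4) = ∑ _i : Fin k, (2*r-4) := by
        rw [Finset.sum_const, Finset.card_univ, Fintype.card_fin, smul_eq_mul]
    _ ≤ ∑ i : Fin k, (G.neighborSet (x i)).ncard := Finset.sum_le_sum (fun i _ => this i)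
theorem constructionWitness (k c w : ℕ) (hc : 1 ≤ c) (hc3 : c ≤ 3) (hw : 1 ≤ w)
    (hkm : c*(2*w+1) ≤ k) (hc1 : c = 1 → k = 2*w+1) :
    AlphaWitness k (c*w+2) (k * (2*(c*w+2) - 4)) := by
  classical
  have htt : tt w = 2*w+1 := rfl
  have hmmval : mm c w = c*(2*w+1) := rfl
  have ht3 : 3 ≤ tt w := by omega
  have htm : tt w ≤ mm c w := by rw [hmmval, ← htt]; exact Nat.le_mul_of_pos_left _ hc
  have hm3 : 3 ≤ mm c w := by omega
  have hmk : mm c w ≤ k := by rw [hmmval]; exact hkm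
  have hk3 : 3 ≤ k := by omega
  have hcw1 : 1 ≤ c*w := by
    have := Nat.mul_le_mul hc hw
    omega
  have hmcw : mm c w = 2*(c*w) + c := by rw [hmmval]; ring
  -- generic clique builder from pick functions
  have buildS : ∀ (b N : ℕ) (f : ℕ → ℕ), b < mm c w →
      (∀ ℓ, ℓ+1 < N → f ℓ + 2 ≤ f (ℓ+1)) →
      (∀ ℓ, ℓ < N → 1 ≤ f ℓ ∧ f ℓ ≤ mm c w - 1) →
      ∃ S : Finset (Fin (k + mm c w)), S.card = N ∧
        (∀ v ∈ S, ∃ ℓ, ℓ < N ∧ (v : ℕ) = k + (b + f ℓ) % mm c w) ∧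
        (GG k c w).IsClique ↑S := by
    intro b N f hb hstep hbnd
    have hmono : ∀ ℓ' ℓ, ℓ < ℓ' → ℓ' < N → f ℓ + 2 ≤ f ℓ' := by
      intro ℓ'
      induction ℓ' with
      | zero => omega
      | succ a ih =>
        intro ℓ hlt hlt'
        rcases Nat.lt_or_ge ℓ a with h | h
        · have h1 := ih ℓ h (by omega)
          have h2 := hstep a hlt'
          omega
        · have : ℓ = a := by omega
          subst this
          exact hstep ℓ hlt'
    have hkey : ∀ ℓ ℓ', ℓ < ℓ' → ℓ' < N →
        coreAdj (mm c w) ((b + f ℓ) % mm c w) ((b + f ℓ') % mm c w) := by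
      intro ℓ ℓ' hlt hlt'
      have h1 := hbnd ℓ (by omega)
      have h2 := hbnd ℓ' hlt'
      have h3 := hmono ℓ' ℓ hlt hlt'
      exact coreAdj_picks hm3 hb (by omega) (by omega) (by omega) (by omega)
    refine ⟨(Finset.range N).image (fun ℓ => (⟨k + (b + f ℓ) % mm c w, by
        have := Nat.mod_lt (b + f ℓ) (show 0 < mm c w by omega); omega⟩ : Fin (k + mm c w))),
      ?_, ?_, ?_⟩
    · rw [Finset.card_image_of_injOn, Finset.card_range]
      intro ℓ hℓ ℓ' hℓ' heq
      simp only [Finset.mem_coe, Finset.mem_range] at hℓ hℓ'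
      have hveq : k + (b + f ℓ) % mm c w = k + (b + f ℓ') % mm c w := congrArg Fin.val heq
      by_contra hne
      rcases Nat.lt_or_ge ℓ ℓ' with hlt | hge
      · exact (hkey ℓ ℓ' hlt hℓ').1 (by omega)
      · exact (hkey ℓ' ℓ (by omega) hℓ).1 (by omega)
    · intro v hv
      obtain ⟨ℓ, hℓ, rfl⟩ := Finset.mem_image.1 hv
      exact ⟨ℓ, Finset.mem_range.1 hℓ, rfl⟩
    · intro p hp q hq hpq
      simp only [Finset.coe_image, Set.mem_image, Finset.mem_coe, Finset.mem_range] at hp hq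
      obtain ⟨ℓ, hℓ, rfl⟩ := hp
      obtain ⟨ℓ', hℓ', rfl⟩ := hq
      have hne : ℓ ≠ ℓ' := by
        intro hh; subst hh; exact hpq rfl
      have hcc : ∀ (a a' : ℕ) (h1 : k + a < k + mm c w) (h2 : k + a' < k + mm c w),
          coreAdj (mm c w) a a' →
          (GG k c w).Adj (⟨k + a, h1⟩ : Fin (k + mm c w)) ⟨k + a', h2⟩ := by
        intro a a' h1 h2 hca
        rw [GG_adj_cc' (by simp) (by simp)]
        have e1 : k + a - k = a := by omega
        have e2 : k + a' - k = a' := by omega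
        rw [e1, e2]
        exact hca
      rcases Nat.lt_or_ge ℓ ℓ' with hlt | hge
      · exact hcc _ _ _ _ (hkey ℓ ℓ' hlt hℓ')
      · exact ((GG k c w).adj_symm (hcc _ _ _ _ (hkey ℓ' ℓ (by omega) hℓ)))
  -- residue helpers
  have hres1 : ∀ (b u : ℕ), u % tt w ≠ 0 →
      ((b + u) % mm c w) % tt w ≠ b % tt w := by
    intro b u hu
    rw [hmmval, ← htt]
    exact pick_res_ne (by omega) hu
  have hres2 : ∀ (g h u : ℕ), g < tt w → h < tt w →
      u % tt w ≠ (h + tt w - g) % tt w → ((g + u) % mm c w) % tt w ≠ h := by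
    intro g h u hg hh hu
    rw [hmmval, ← htt]
    exact pick_res_ne2 (by omega) hg hh hu
  -- sup graph helpers
  have hGadj' : ∀ (u v a b : Fin (k + mm c w)), (GG k c w).Adj a b →
      ((GG k c w) ⊔ fromEdgeSet {s(u,v)}).Adj a b :=
    fun u v a b h => (SimpleGraph.sup_adj _ _ _ _).2 (Or.inl h)
  have hGnew : ∀ (u v : Fin (k + mm c w)), u ≠ v →
      ((GG k c w) ⊔ fromEdgeSet {s(u,v)}).Adj u v :=
    fun u v hne => (SimpleGraph.sup_adj _ _ _ _).2
      (Or.inr ((SimpleGraph.fromEdgeSet_adj _).2 ⟨Set.mem_singleton _, hne⟩))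
  -- assemblers
  have assemble2 : ∀ (a b : Fin (k + mm c w)) (S : Finset (Fin (k + mm c w))) (N : ℕ),
      S.card = N → (GG k c w).IsClique ↑S → a ≠ b → a ∉ S → b ∉ S →
      (∀ s ∈ S, (GG k c w).Adj a s) → (∀ s ∈ S, (GG k c w).Adj b s) →
      ((GG k c w) ⊔ fromEdgeSet {s(a,b)}).IsNClique (N + 2) (insert a (insert b S)) := by
    intro a b S N hcard hclq hab haS hbS haadj hbadj
    constructor
    · intro p hp q hq hpq
      simp only [Finset.coe_insert, Set.mem_insert_iff, Finset.mem_coe] at hp hq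
      rcases hp with rfl | rfl | hp <;> rcases hq with rfl | rfl | hq
      · exact absurd rfl hpq
      · exact hGnew _ _ hab
      · exact hGadj' _ _ _ _ (haadj q hq)
      · exact (hGnew _ _ hab).symm
      · exact absurd rfl hpq
      · exact hGadj' _ _ _ _ (hbadj q hq)
      · exact hGadj' _ _ _ _ ((haadj p hp).symm)
      · exact hGadj' _ _ _ _ ((hbadj p hp).symm)
      · exact hGadj' _ _ _ _ (hclq hp hq hpq)
    · rw [Finset.card_insert_of_notMem (by
          simp only [Finset.mem_insert]
          push_neg
          exact ⟨hab, haS⟩),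
        Finset.card_insert_of_notMem hbS, hcard]
  have assemble3 : ∀ (xl a b : Fin (k + mm c w)) (S : Finset (Fin (k + mm c w))) (N : ℕ),
      S.card = N → (GG k c w).IsClique ↑S →
      xl ≠ a → xl ≠ b → a ≠ b → xl ∉ S → a ∉ S → b ∉ S →
      (GG k c w).Adj xl a → (GG k c w).Adj xl b →
      (∀ s ∈ S, (GG k c w).Adj xl s) →
      (∀ s ∈ S, (GG k c w).Adj a s) → (∀ s ∈ S, (GG k c w).Adj b s) →
      ((GG k c w) ⊔ fromEdgeSet {s(a,b)}).IsNClique (N + 3) (insert xl (insert a (insert b S))) := by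
    intro xl a b S N hcard hclq hxa hxb hab hxS haS hbS hadjxa hadjxb hxadj haadj hbadj
    constructor
    · intro p hp q hq hpq
      simp only [Finset.coe_insert, Set.mem_insert_iff, Finset.mem_coe] at hp hq
      rcases hp with rfl | rfl | rfl | hp <;> rcases hq with rfl | rfl | rfl | hq
      · exact absurd rfl hpq
      · exact hGadj' _ _ _ _ hadjxa
      · exact hGadj' _ _ _ _ hadjxb
      · exact hGadj' _ _ _ _ (hxadj q hq)
      · exact hGadj' _ _ _ _ hadjxa.symm
      · exact absurd rfl hpq
      · exact hGnew _ _ hab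
      · exact hGadj' _ _ _ _ (haadj q hq)
      · exact hGadj' _ _ _ _ hadjxb.symm
      · exact (hGnew _ _ hab).symm
      · exact absurd rfl hpq
      · exact hGadj' _ _ _ _ (hbadj q hq)
      · exact hGadj' _ _ _ _ ((hxadj p hp).symm)
      · exact hGadj' _ _ _ _ ((haadj p hp).symm)
      · exact hGadj' _ _ _ _ ((hbadj p hp).symm)
      · exact hGadj' _ _ _ _ (hclq hp hq hpq)
    · rw [Finset.card_insert_of_notMem (by
          simp only [Finset.mem_insert]
          push_neg
          exact ⟨hxa, hxb, hxS⟩),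
        Finset.card_insert_of_notMem (by
          simp only [Finset.mem_insert]
          push_neg
          exact ⟨hab, haS⟩),
        Finset.card_insert_of_notMem hbS, hcard]
  
  have hmodmod : ∀ a : ℕ, (a % mm c w) % tt w = a % tt w :=
    fun a => Nat.mod_mod_of_dvd a (dvd_mul_left _ _)
  -- main saturation lemma, first vertex an x-vertex
  have main : ∀ (u v : Fin (k + mm c w)), PP k c w hmk u ≠ PP k c w hmk v →
      ¬ (GG k c w).Adj u v → (u:ℕ) < k →
      ¬ ((GG k c w) ⊔ fromEdgeSet {s(u,v)}).CliqueFree (c*w+2) := by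
    intro u v hPuv hnadj huk hfree'
    have huv : u ≠ v := fun h => hPuv (by rw [h])
    have hglt : gam c w (u:ℕ) < tt w := gam_lt _
    rcases Nat.lt_or_ge (v:ℕ) k with hvk | hvk
    · -- both x-vertices
      have hhlt : gam c w (v:ℕ) < tt w := gam_lt _
      by_cases hgh : gam c w (u:ℕ) = gam c w (v:ℕ)
      · obtain ⟨S, hScard, hSmem, hSclq⟩ := buildS (gam c w (u:ℕ)) (c*w) (f1 w) (by omega)
          (fun ℓ _ => (f1_step hw ℓ).1)
          (fun ℓ hℓ => ⟨by unfold f1; omega,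
            by have := f1_le hw hc (show ℓ < c*w from hℓ); omega⟩)
        have hkey : ∀ s ∈ S, ((s:ℕ) - k) % tt w ≠ gam c w (u:ℕ) := by
          intro s hs
          obtain ⟨ℓ, hℓ, hval⟩ := hSmem s hs
          rw [show (s:ℕ) - k = (gam c w (u:ℕ) + f1 w ℓ) % mm c w by omega]
          have h0 : f1 w ℓ % tt w ≠ 0 := by
            rw [htt, f1_mod hw ℓ]; omega
          have := hres1 (gam c w (u:ℕ)) (f1 w ℓ) h0
          rwa [Nat.mod_eq_of_lt hglt] at this
        have hUadj : ∀ s ∈ S, (GG k c w).Adj u s := by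
          intro s hs
          obtain ⟨ℓ, hℓ, hval⟩ := hSmem s hs
          rw [GG_adj_xc' huk (by omega)]
          exact hkey s hs
        have hVadj : ∀ s ∈ S, (GG k c w).Adj v s := by
          intro s hs
          obtain ⟨ℓ, hℓ, hval⟩ := hSmem s hs
          rw [GG_adj_xc' hvk (by omega), ← hgh]
          exact hkey s hs
        have hUS : u ∉ S := by
          intro h; obtain ⟨ℓ, hℓ, hval⟩ := hSmem u h; omega
        have hVS : v ∉ S := by
          intro h; obtain ⟨ℓ, hℓ, hval⟩ := hSmem v h; omega
        exact hfree' _ (assemble2 u v S (c*w) hScard hSclq huv hUS hVS hUadj hVadj)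
      · set e₀ := (gam c w (v:ℕ) + tt w - gam c w (u:ℕ)) % tt w with he₀def
        have he₀lt : e₀ < tt w := Nat.mod_lt _ (by omega)
        have he₀pos : e₀ ≠ 0 := by
          rw [he₀def]
          have hval : (gam c w (v:ℕ) + tt w - gam c w (u:ℕ)) % tt w =
              if gam c w (v:ℕ) + tt w - gam c w (u:ℕ) < tt w
              then gam c w (v:ℕ) + tt w - gam c w (u:ℕ)
              else gam c w (v:ℕ) + tt w - gam c w (u:ℕ) - tt w := mod_lt_two_mul (by omega)
          rw [hval]
          split_ifs <;> omega
        have he₀ : 1 ≤ e₀ ∧ e₀ ≤ 2*w := by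
          rw [htt] at he₀lt
          omega
        obtain ⟨S, hScard, hSmem, hSclq⟩ := buildS (gam c w (u:ℕ)) (c*w) (f2 w e₀) (by omega)
          (fun ℓ _ => f2_step hw he₀ ℓ)
          (fun ℓ hℓ => by
            have := f2_facts hw hc he₀ (show ℓ < c*w from hℓ)
            omega)
        have hUadj : ∀ s ∈ S, (GG k c w).Adj u s := by
          intro s hs
          obtain ⟨ℓ, hℓ, hval⟩ := hSmem s hs
          rw [GG_adj_xc' huk (by omega)]
          rw [show (s:ℕ) - k = (gam c w (u:ℕ) + f2 w e₀ ℓ) % mm c w by omega]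
          have hmw : ℓ % w < w := Nat.mod_lt _ (by omega)
          have hpk := pk_facts (w := w) he₀ hmw
          have hf2 := f2_facts hw hc he₀ (show ℓ < c*w from hℓ)
          have h0 : f2 w e₀ ℓ % tt w ≠ 0 := by
            rw [htt, hf2.2.2]; omega
          have := hres1 (gam c w (u:ℕ)) (f2 w e₀ ℓ) h0
          rwa [Nat.mod_eq_of_lt hglt] at this
        have hVadj : ∀ s ∈ S, (GG k c w).Adj v s := by
          intro s hs
          obtain ⟨ℓ, hℓ, hval⟩ := hSmem s hs
          rw [GG_adj_xc' hvk (by omega)]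
          rw [show (s:ℕ) - k = (gam c w (u:ℕ) + f2 w e₀ ℓ) % mm c w by omega]
          have hmw : ℓ % w < w := Nat.mod_lt _ (by omega)
          have hpk := pk_facts (w := w) he₀ hmw
          have hf2 := f2_facts hw hc he₀ (show ℓ < c*w from hℓ)
          apply hres2 _ _ _ hglt hhlt
          rw [← he₀def, htt, hf2.2.2]
          exact hpk.2.2.1
        have hUS : u ∉ S := by
          intro h; obtain ⟨ℓ, hℓ, hval⟩ := hSmem u h; omega
        have hVS : v ∉ S := by
          intro h; obtain ⟨ℓ, hℓ, hval⟩ := hSmem v h; omega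
        exact hfree' _ (assemble2 u v S (c*w) hScard hSclq huv hUS hVS hUadj hVadj)
    · -- u is an x-vertex, v is a core vertex
      have hzlt : (v:ℕ) - k < mm c w := by have := v.isLt; omega
      have hresz : ((v:ℕ) - k) % tt w = gam c w (u:ℕ) := by
        by_contra hres
        exact hnadj ((GG_adj_xc' huk hvk).2 hres)
      have hPne : (u:ℕ) ≠ (v:ℕ) - k := by
        intro h
        apply hPuv
        apply Fin.ext
        rw [PP_val, PP_val, if_pos huk, if_neg (by omega)]
        exact h
      rcases Nat.lt_or_ge c 2 with hc2 | hc2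
      · exfalso
        have hc1' : c = 1 := by omega
        have hk1 := hc1 hc1'
        have hm1 : mm c w = 2*w+1 := by rw [hmmval, hc1']; ring
        have hum : (u:ℕ) < mm c w := by omega
        have hgu : gam c w (u:ℕ) = (u:ℕ) % tt w := by unfold gam; rw [if_pos hum]
        have h1 : ((v:ℕ) - k) % tt w = (v:ℕ) - k := Nat.mod_eq_of_lt (by omega)
        have h2 : (u:ℕ) % tt w = (u:ℕ) := Nat.mod_eq_of_lt (by omega)
        rw [h1, hgu, h2] at hresz
        exact hPne hresz.symm
      · obtain ⟨S, hScard, hSmem, hSclq⟩ := buildS ((v:ℕ) - k) (c*w) (f3 w) hzlt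
          (fun ℓ _ => (f3_step hw ℓ).1)
          (fun ℓ hℓ => by
            have := f3_bounds hw hc2 (show ℓ < c*w from hℓ); omega)
        have hUadj : ∀ s ∈ S, (GG k c w).Adj u s := by
          intro s hs
          obtain ⟨ℓ, hℓ, hval⟩ := hSmem s hs
          rw [GG_adj_xc' huk (by omega)]
          rw [show (s:ℕ) - k = ((v:ℕ) - k + f3 w ℓ) % mm c w by omega]
          have h0 : f3 w ℓ % tt w ≠ 0 := by
            have := f3_mod hw ℓ
            rw [htt]; omega
          have := hres1 ((v:ℕ) - k) (f3 w ℓ) h0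
          rwa [hresz] at this
        have hVadj : ∀ s ∈ S, (GG k c w).Adj v s := by
          intro s hs
          obtain ⟨ℓ, hℓ, hval⟩ := hSmem s hs
          rw [GG_adj_cc' hvk (by omega)]
          rw [show (s:ℕ) - k = ((v:ℕ) - k + f3 w ℓ) % mm c w by omega]
          have hb := f3_bounds hw hc2 (show ℓ < c*w from hℓ)
          have := coreAdj_picks (m := mm c w) (g := (v:ℕ)-k) (u₁ := 0) (u₂ := f3 w ℓ)
            hm3 hzlt (by omega) (by omega) (by omega) (by omega)
          rwa [Nat.add_zero, Nat.mod_eq_of_lt hzlt] at this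
        have hUS : u ∉ S := by
          intro h; obtain ⟨ℓ, hℓ, hval⟩ := hSmem u h; omega
        have hVS : v ∉ S := by
          intro h
          obtain ⟨ℓ, hℓ, hval⟩ := hSmem v h
          have hb := f3_bounds hw hc2 (show ℓ < c*w from hℓ)
          have hne : ((v:ℕ) - k + f3 w ℓ) % mm c w ≠ ((v:ℕ) - k) % mm c w :=
            res_shift_ne (by omega) (by rw [Nat.mod_eq_of_lt (show f3 w ℓ < mm c w by omega)]; omega)
          rw [Nat.mod_eq_of_lt hzlt] at hne
          omega
        exact hfree' _ (assemble2 u v S (c*w) hScard hSclq huv hUS hVS hUadj hVadj)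
  -- core-core saturation
  have maincc : ∀ (u v : Fin (k + mm c w)) (z : ℕ), z < mm c w → (u:ℕ) = k + z →
      (v:ℕ) = k + (z+1) % mm c w →
      ¬ ((GG k c w) ⊔ fromEdgeSet {s(u,v)}).CliqueFree (c*w+2) := by
    intro u v z hz hu hv hfree'
    have hz1 : (z+1) % mm c w < mm c w := Nat.mod_lt _ (by omega)
    have hz1val : (z+1) % mm c w = if z+1 < mm c w then z+1 else z+1 - mm c w :=
      mod_lt_two_mul (by omega)
    have hzz1 : z ≠ (z+1) % mm c w := by
      rw [hz1val]; split_ifs <;> omega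
    have huv : u ≠ v := by
      intro h
      rw [h] at hu
      omega
    have hblt : (z+2) % mm c w < mm c w := Nat.mod_lt _ (by omega)
    set xl : Fin (k + mm c w) := ⟨(z+2) % mm c w, by omega⟩ with hxl
    have hxlval : (xl:ℕ) = (z+2) % mm c w := rfl
    have hxlk : (xl:ℕ) < k := by omega
    have hgb : gam c w ((z+2) % mm c w) = ((z+2) % mm c w) % tt w := by
      unfold gam; rw [if_pos hblt]
    obtain ⟨S, hScard, hSmem, hSclq⟩ := buildS ((z+2) % mm c w) (c*w - 1) (f1 w) hblt
      (fun ℓ _ => (f1_step hw ℓ).1)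
      (fun ℓ hℓ => ⟨by unfold f1; omega, by
        have := f1_le4 hw hc (show ℓ+1 < c*w by omega); omega⟩)
    have hoff : ∀ ℓ : ℕ, ((z+2) % mm c w + f1 w ℓ) % mm c w = (z + (2 + f1 w ℓ)) % mm c w := by
      intro ℓ
      rw [Nat.mod_add_mod]
      congr 1
      omega
    have hoff2 : ∀ ℓ : ℕ, ((z+2) % mm c w + f1 w ℓ) % mm c w
        = ((z+1) % mm c w + (1 + f1 w ℓ)) % mm c w := by
      intro ℓ
      rw [Nat.mod_add_mod, Nat.mod_add_mod]
      congr 1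
      omega
    have hf1b : ∀ ℓ, ℓ < c*w - 1 → 1 ≤ f1 w ℓ ∧ f1 w ℓ ≤ mm c w - 4 := by
      intro ℓ hℓ
      constructor
      · unfold f1; omega
      · have := f1_le4 hw hc (show ℓ+1 < c*w by omega); omega
    have hxladjS : ∀ s ∈ S, (GG k c w).Adj xl s := by
      intro s hs
      obtain ⟨ℓ, hℓ, hval⟩ := hSmem s hs
      rw [GG_adj_xc' hxlk (by omega)]
      rw [show (s:ℕ) - k = ((z+2) % mm c w + f1 w ℓ) % mm c w by omega, hxlval, hgb]
      have h0 : f1 w ℓ % tt w ≠ 0 := by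
        rw [htt, f1_mod hw ℓ]; omega
      exact hres1 ((z+2) % mm c w) (f1 w ℓ) h0
    have hxladju : (GG k c w).Adj xl u := by
      rw [GG_adj_xc' hxlk (by omega), hxlval, hgb]
      rw [show (u:ℕ) - k = z by omega]
      have h2 : (2:ℕ) % tt w ≠ 0 := by
        rw [Nat.mod_eq_of_lt (by omega)]; omega
      exact fun h => (hres1 z 2 h2) h.symm
    have hxladjv : (GG k c w).Adj xl v := by
      rw [GG_adj_xc' hxlk (by omega), hxlval, hgb]
      rw [show (v:ℕ) - k = (z+1) % mm c w by omega, hmodmod, hmodmod]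
      have h1 : (1:ℕ) % tt w ≠ 0 := by
        rw [Nat.mod_eq_of_lt (by omega)]; omega
      have := res_shift_ne (t := tt w) (a := z+1) (d := 1) (by omega) h1
      intro h
      apply this
      rw [show z+1+1 = z+2 by omega]
      exact h.symm
    have huadjS : ∀ s ∈ S, (GG k c w).Adj u s := by
      intro s hs
      obtain ⟨ℓ, hℓ, hval⟩ := hSmem s hs
      rw [GG_adj_cc' (by omega) (by omega)]
      rw [show (s:ℕ) - k = ((z+2) % mm c w + f1 w ℓ) % mm c w by omega, hoff ℓ,
        show (u:ℕ) - k = z by omega]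
      have hb := hf1b ℓ hℓ
      have := coreAdj_picks (m := mm c w) (g := z) (u₁ := 0) (u₂ := 2 + f1 w ℓ)
        hm3 hz (by omega) (by omega) (by omega) (by omega)
      rwa [Nat.add_zero, Nat.mod_eq_of_lt hz] at this
    have hvadjS : ∀ s ∈ S, (GG k c w).Adj v s := by
      intro s hs
      obtain ⟨ℓ, hℓ, hval⟩ := hSmem s hs
      rw [GG_adj_cc' (by omega) (by omega)]
      rw [show (s:ℕ) - k = ((z+2) % mm c w + f1 w ℓ) % mm c w by omega, hoff2 ℓ,
        show (v:ℕ) - k = (z+1) % mm c w by omega]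
      have hb := hf1b ℓ hℓ
      have := coreAdj_picks (m := mm c w) (g := (z+1) % mm c w) (u₁ := 0) (u₂ := 1 + f1 w ℓ)
        hm3 hz1 (by omega) (by omega) (by omega) (by omega)
      rwa [Nat.add_zero, Nat.mod_eq_of_lt hz1] at this
    have hxlu : xl ≠ u := by intro h; rw [h] at hxlk; omega
    have hxlv : xl ≠ v := by intro h; rw [h] at hxlk; omega
    have hxlS : xl ∉ S := by
      intro h; obtain ⟨ℓ, hℓ, hval⟩ := hSmem xl h
      rw [hxlval] at hval; omega
    have hUS : u ∉ S := by
      intro h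
      obtain ⟨ℓ, hℓ, hval⟩ := hSmem u h
      rw [hoff ℓ] at hval
      have hb := hf1b ℓ hℓ
      have hne : (z + (2 + f1 w ℓ)) % mm c w ≠ z % mm c w :=
        res_shift_ne (by omega) (by rw [Nat.mod_eq_of_lt (show 2 + f1 w ℓ < mm c w by omega)]; omega)
      rw [Nat.mod_eq_of_lt hz] at hne
      omega
    have hVS : v ∉ S := by
      intro h
      obtain ⟨ℓ, hℓ, hval⟩ := hSmem v h
      rw [hoff2 ℓ] at hval
      have hb := hf1b ℓ hℓ
      have hne : ((z+1) % mm c w + (1 + f1 w ℓ)) % mm c w ≠ ((z+1) % mm c w) % mm c w :=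
        res_shift_ne (by omega) (by rw [Nat.mod_eq_of_lt (show 1 + f1 w ℓ < mm c w by omega)]; omega)
      rw [Nat.mod_eq_of_lt hz1] at hne
      omega
    have hclq := assemble3 xl u v S (c*w - 1) hScard hSclq hxlu hxlv huv hxlS hUS hVS
      hxladju hxladjv hxladjS huadjS hvadjS
    rw [show c*w - 1 + 3 = c*w + 2 by omega] at hclq
    exact hfree' _ hclq
  have hswap : ∀ (a b : Fin (k + mm c w)),
      ((GG k c w) ⊔ fromEdgeSet {s(a,b)}) = ((GG k c w) ⊔ fromEdgeSet {s(b,a)}) := by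
    intro a b
    rw [Sym2.eq_swap]
  have hsat : ∀ u v, PP k c w hmk u ≠ PP k c w hmk v → ¬ (GG k c w).Adj u v →
      ¬ ((GG k c w) ⊔ fromEdgeSet {s(u,v)}).CliqueFree (c*w+2) := by
    intro u v hPuv hnadj
    rcases Nat.lt_or_ge (u:ℕ) k with huk | huk
    · exact main u v hPuv hnadj huk
    rcases Nat.lt_or_ge (v:ℕ) k with hvk | hvk
    · rw [hswap]
      exact main v u (fun h => hPuv h.symm) (fun h => hnadj h.symm) hvk
    · have hzu : (u:ℕ) - k < mm c w := by have := u.isLt; omega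
      have hzv : (v:ℕ) - k < mm c w := by have := v.isLt; omega
      have hncore : ¬ coreAdj (mm c w) ((u:ℕ)-k) ((v:ℕ)-k) :=
        fun h => hnadj ((GG_adj_cc' huk hvk).2 h)
      unfold coreAdj at hncore
      push_neg at hncore
      by_cases heqz : (u:ℕ) - k = (v:ℕ) - k
      · exfalso
        apply hPuv
        apply Fin.ext
        rw [PP_val, PP_val, if_neg (by omega), if_neg (by omega)]
        exact heqz
      · have hcyc := hncore heqz
        unfold cyc at hcyc
        rcases hcyc with h1 | h1 | h1 | h1
        · exact maincc u v ((u:ℕ)-k) hzu (by omega)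
            (by rw [Nat.mod_eq_of_lt (by omega)]; omega)
        · rw [hswap]
          exact maincc v u ((v:ℕ)-k) hzv (by omega)
            (by rw [Nat.mod_eq_of_lt (by omega)]; omega)
        · exact maincc u v ((u:ℕ)-k) hzu (by omega)
            (by rw [show (u:ℕ)-k+1 = mm c w from h1.1, Nat.mod_self]; omega)
        · rw [hswap]
          exact maincc v u ((v:ℕ)-k) hzv (by omega)
            (by rw [show (v:ℕ)-k+1 = mm c w from h1.1, Nat.mod_self]; omega)
  -- K_r-freeness
  have hfree : (GG k c w).CliqueFree (c*w+2) := by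
    intro T hT
    have hclq := hT.1
    have hcard := hT.2
    have hsplit := Finset.card_filter_add_card_filter_not
      (s := T) (p := fun v : Fin (k + mm c w) => (v:ℕ) < k)
    set Tx := T.filter (fun v : Fin (k + mm c w) => (v:ℕ) < k) with hTxdef
    set Tc := T.filter (fun v : Fin (k + mm c w) => ¬ (v:ℕ) < k) with hTcdef
    have hTx1 : Tx.card ≤ 1 := by
      by_contra hgt
      push_neg at hgt
      obtain ⟨a, ha, b, hb, hab⟩ := Finset.one_lt_card.1 hgt
      have haT := Finset.mem_filter.1 ha
      have hbT := Finset.mem_filter.1 hb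
      exact GG_nadj_xx' haT.2 hbT.2 (hclq haT.1 hbT.1 hab)
    set I := Tc.image (fun v : Fin (k + mm c w) => (v:ℕ) - k) with hIdef
    have hIcard : I.card = Tc.card := Finset.card_image_of_injOn (by
      intro a ha b hb heq
      have ha' := (Finset.mem_filter.1 ha).2
      have hb' := (Finset.mem_filter.1 hb).2
      apply Fin.ext
      simp only at heq
      omega)
    have hImem : ∀ z ∈ I, z < mm c w ∧ ∃ v ∈ Tc, (v:ℕ) = k + z := by
      intro z hz
      obtain ⟨v, hv, rfl⟩ := Finset.mem_image.1 hz
      have hv' := (Finset.mem_filter.1 hv).2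
      have := v.isLt
      exact ⟨by omega, v, hv, by omega⟩
    have hIadj : ∀ z ∈ I, ∀ z' ∈ I, z ≠ z' → coreAdj (mm c w) z z' := by
      intro z hz z' hz' hne
      obtain ⟨hzm, v, hv, hveq⟩ := hImem z hz
      obtain ⟨hz'm, v', hv', hv'eq⟩ := hImem z' hz'
      have hvv : v ≠ v' := by intro h; subst h; omega
      have hadj := hclq (Finset.mem_of_mem_filter _ hv) (Finset.mem_of_mem_filter _ hv') hvv
      have h2 := (GG_adj_cc' (by omega) (by omega)).1 hadj
      rw [show z = (v:ℕ)-k by omega, show z' = (v':ℕ)-k by omega]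
      exact h2
    have hIsub : ∀ z ∈ I, z < mm c w := fun z hz => (hImem z hz).1
    rcases Nat.le_one_iff_eq_zero_or_eq_one.1 hTx1 with h0 | h1
    · have hcount := count1 hm3 I hIsub hIadj
      omega
    · obtain ⟨xv, hxv⟩ := Finset.card_eq_one.1 h1
      have hxvT : xv ∈ Tx := by rw [hxv]; exact Finset.mem_singleton_self _
      have hxvk : (xv:ℕ) < k := (Finset.mem_filter.1 hxvT).2
      have hIres : ∀ z ∈ I, z % (2*w+1) ≠ gam c w xv.val := by
        intro z hz
        obtain ⟨hzm, v, hv, hveq⟩ := hImem z hz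
        have hvv : xv ≠ v := by
          intro h
          have h2 := (Finset.mem_filter.1 hv).2
          rw [← h] at h2
          exact h2 hxvk
        have hadj := hclq (Finset.mem_of_mem_filter _ hxvT) (Finset.mem_of_mem_filter _ hv) hvv
        have h2 := (GG_adj_xc' hxvk (by omega)).1 hadj
        rw [show (v:ℕ) - k = z by omega] at h2
        rw [← htt]
        exact h2
      have hcount := count2 hw hc (show gam c w xv.val < 2*w+1 from gam_lt _) I
        (by rw [← hmmval]; exact hIsub) hIres
        (by rw [← hmmval]; exact hIadj)
      omega
  -- neighbourhood sizes
  have hdeg : ∀ i : Fin k, ((GG k c w).neighborSet (xx k c w i)).ncard = mm c w - c := by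
    intro i
    set NB := ((Finset.range (mm c w)).filter (fun z => ¬ z % tt w = gam c w i.val)).image
        (fun z => (⟨k + z % mm c w, by
          have := Nat.mod_lt z (show 0 < mm c w by omega); omega⟩ : Fin (k + mm c w))) with hNBdef
    have hNF : (GG k c w).neighborSet (xx k c w i) = ↑NB := by
      ext v
      simp only [SimpleGraph.mem_neighborSet, hNBdef, Finset.coe_image, Set.mem_image,
        Finset.mem_coe, Finset.mem_filter, Finset.mem_range]
      constructor
      · intro hadj
        rcases Nat.lt_or_ge (v:ℕ) k with hv | hv
        · exact absurd hadj (GG_nadj_xx' (show ((xx k c w i):ℕ) < k from i.isLt) hv)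
        · have hres := (GG_adj_xc' (show ((xx k c w i):ℕ) < k from i.isLt) hv).1 hadj
          refine ⟨(v:ℕ) - k, ⟨by have := v.isLt; omega, hres⟩, ?_⟩
          apply Fin.ext
          show k + ((v:ℕ) - k) % mm c w = (v:ℕ)
          rw [Nat.mod_eq_of_lt (by have := v.isLt; omega)]
          omega
      · rintro ⟨z, ⟨hz, hres⟩, rfl⟩
        rw [GG_adj_xc' (show ((xx k c w i):ℕ) < k from i.isLt)
          (by show k ≤ k + z % mm c w; omega)]
        show (k + z % mm c w - k) % tt w ≠ _
        rw [Nat.mod_eq_of_lt hz, Nat.add_sub_cancel_left]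
        exact hres
    rw [hNF, Set.ncard_coe_finset, hNBdef]
    rw [Finset.card_image_of_injOn (by
      intro a ha b hb heq
      simp only [Finset.mem_coe, Finset.mem_filter, Finset.mem_range] at ha hb
      have hval : k + a % mm c w = k + b % mm c w := congrArg Fin.val heq
      rw [Nat.mod_eq_of_lt ha.1, Nat.mod_eq_of_lt hb.1] at hval
      omega)]
    have hcnt : ((Finset.range (mm c w)).filter (fun z => z % tt w = gam c w i.val)).card = c := by
      exact count_res (c := c) (t := tt w) (g := gam c w i.val) (by omega) (gam_lt _)
    have hsplit := Finset.card_filter_add_card_filter_not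
      (s := Finset.range (mm c w)) (p := fun z => z % tt w = gam c w i.val)
    rw [Finset.card_range] at hsplit
    omega
  -- assemble the witness
  refine ⟨k + mm c w, GG k c w, PP k c w hmk, xx k c w,
    ⟨GG_proper hmk, hfree, hsat⟩, PP_x hmk, ?_, ?_⟩
  · intro i j
    exact GG_nadj_xx' i.isLt j.isLt
  · have hA : k * (2*(c*w+2) - 4) = ∑ _i : Fin k, (mm c w - c) := by
      rw [Finset.sum_const, Finset.card_univ, Fintype.card_fin, smul_eq_mul]
      congr 1
      omega
    rw [hA]
    exact Finset.sum_congr rfl (fun i _ => (hdeg i).symm)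

theorem stmt_14 (k r : ℕ) (hr : 3 ≤ r) (hkr : r ≤ k)
    (hcase : k = 2 * r - 3 ∨ (2 * r - 2 ≤ k ∧ r % 2 = 0) ∨ (2 * r - 1 ≤ k ∧ r % 3 = 2)) :
    alpha k r = k * (2 * r - 4) := by
  have hrw : ∃ c w, 1 ≤ c ∧ c ≤ 3 ∧ 1 ≤ w ∧ c*(2*w+1) ≤ k ∧ (c = 1 → k = 2*w+1) ∧ c*w+2 = r := by
    rcases hcase with h1 | ⟨h2, h2'⟩ | ⟨h3, h3'⟩
    · exact ⟨1, r-2, by omega, by omega, by omega, by omega, by omega, by omega⟩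
    · exact ⟨2, r/2-1, by omega, by omega, by omega, by omega, by omega, by omega⟩
    · exact ⟨3, (r-2)/3, by omega, by omega, by omega, by omega, by omega, by omega⟩
  obtain ⟨c, w, hc, hc3, hw, hkm, hc1, hcwr⟩ := hrw
  have hwit := constructionWitness k c w hc hc3 hw hkm hc1
  rw [hcwr] at hwit
  have hmem : (k*(2*r-4)) ∈ {m | AlphaWitness k r m} := hwit
  apply le_antisymm
  · exact Nat.sInf_le hmem
  · exact le_csInf ⟨_, hmem⟩ (fun b hb => witness_lower k r hr (by omega) hb)
end

section
/- For every k ≥ 3, α(k, 3) = 3(k - 1). -/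
open SimpleGraph

lemma noTri' {V : Type} {G : SimpleGraph V} (hfree : G.CliqueFree 3) {a b c : V}
    (h1 : G.Adj a b) (h2 : G.Adj a c) (h3 : G.Adj b c) : False := by
  classical
  exact hfree {a,b,c} (is3Clique_triple_iff.mpr ⟨h1, h2, h3⟩)

lemma common_of_sat {V : Type} {G : SimpleGraph V} (hfree : G.CliqueFree 3) {u v : V}
    (h : ¬ (G ⊔ SimpleGraph.fromEdgeSet {s(u, v)}).CliqueFree 3) :
    ∃ w, G.Adj u w ∧ G.Adj v w := by
  classical
  rw [CliqueFree] at h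
  push_neg at h
  obtain ⟨t, ht⟩ := h
  obtain ⟨a, b, c, hab, hac, hbc, rfl⟩ := is3Clique_iff.mp ht
  rw [sup_adj, fromEdgeSet_adj] at hab hac hbc
  -- analyze
  rcases hab with hab | ⟨hab, nab⟩
  · rcases hac with hac | ⟨hac, nac⟩
    · rcases hbc with hbc | ⟨hbc, nbc⟩
      · exact absurd hab (fun h => noTri' hfree h hac hbc)
      · -- s(b,c) = s(u,v), G.Adj a b, G.Adj a c
        simp only [Set.mem_singleton_iff, Sym2.eq_iff] at hbc
        rcases hbc with ⟨rfl, rfl⟩ | ⟨rfl, rfl⟩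
        · exact ⟨a, hab.symm, hac.symm⟩
        · exact ⟨a, hac.symm, hab.symm⟩
    · simp only [Set.mem_singleton_iff, Sym2.eq_iff] at hac
      rcases hbc with hbc | ⟨hbc, nbc⟩
      · rcases hac with ⟨rfl, rfl⟩ | ⟨rfl, rfl⟩
        · exact ⟨b, hab, hbc.symm⟩
        · exact ⟨b, hbc.symm, hab⟩
      · simp only [Set.mem_singleton_iff, Sym2.eq_iff] at hbc
        exfalso; rcases hac with ⟨rfl, rfl⟩ | ⟨rfl, rfl⟩ <;>
          rcases hbc with ⟨h1, h2⟩ | ⟨h1, h2⟩ <;> subst_vars <;> simp_all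
  · simp only [Set.mem_singleton_iff, Sym2.eq_iff] at hab
    rcases hac with hac | ⟨hac, nac⟩
    · rcases hbc with hbc | ⟨hbc, nbc⟩
      · rcases hab with ⟨rfl, rfl⟩ | ⟨rfl, rfl⟩
        · exact ⟨c, hac, hbc⟩
        · exact ⟨c, hbc, hac⟩
      · simp only [Set.mem_singleton_iff, Sym2.eq_iff] at hbc
        exfalso; rcases hab with ⟨rfl, rfl⟩ | ⟨rfl, rfl⟩ <;>
          rcases hbc with ⟨h1, h2⟩ | ⟨h1, h2⟩ <;> subst_vars <;> simp_all
    · simp only [Set.mem_singleton_iff, Sym2.eq_iff] at hac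
      exfalso; rcases hab with ⟨rfl, rfl⟩ | ⟨rfl, rfl⟩ <;>
        rcases hac with ⟨h1, h2⟩ | ⟨h1, h2⟩ <;> subst_vars <;> simp_all

open Finset in

def UG (k : ℕ) : SimpleGraph (Fin (k+3)) where
  Adj u v := (u.val < k ∧ k ≤ v.val ∧ u.val ≠ v.val - k) ∨
             (v.val < k ∧ k ≤ u.val ∧ v.val ≠ u.val - k)
  symm := by constructor; intro u v h; tauto
  loopless := by constructor; intro u h; rcases h with h | h <;> omega

lemma UG_adj {k : ℕ} (u v : Fin (k+3)) : (UG k).Adj u v ↔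
    (u.val < k ∧ k ≤ v.val ∧ u.val ≠ v.val - k) ∨
    (v.val < k ∧ k ≤ u.val ∧ v.val ≠ u.val - k) := Iff.rfl

def UP (k : ℕ) (hk : 3 ≤ k) : Fin (k+3) → Fin k := fun v =>
  if h : v.val < k then ⟨v.val, h⟩ else ⟨v.val - k, by omega⟩

def Ux (k : ℕ) : Fin k → Fin (k+3) := fun i => ⟨i.val, by omega⟩

lemma UG_free (k : ℕ) : (UG k).CliqueFree 3 := by
  intro t ht
  obtain ⟨a, b, c, hab, hac, hbc, rfl⟩ := is3Clique_iff.mp ht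
  rw [UG_adj] at hab hac hbc
  omega

lemma UP_part {k : ℕ} (hk : 3 ≤ k) (u v : Fin (k+3)) (h : (UG k).Adj u v) :
    UP k hk u ≠ UP k hk v := by
  rw [UG_adj] at h
  intro heq
  have hv := congrArg Fin.val heq
  unfold UP at hv
  rcases h with ⟨h1, h2, h3⟩ | ⟨h1, h2, h3⟩
  · rw [dif_pos h1, dif_neg (by omega)] at hv
    exact h3 hv
  · rw [dif_neg (by omega), dif_pos h1] at hv
    exact h3 hv.symm

lemma UG_common {k : ℕ} (hk : 3 ≤ k) (u v : Fin (k+3)) (hP : UP k hk u ≠ UP k hk v)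
    (hna : ¬ (UG k).Adj u v) : ∃ w, (UG k).Adj u w ∧ (UG k).Adj v w := by
  have hne : u ≠ v := fun h => hP (h ▸ rfl)
  have hnev : u.val ≠ v.val := fun h => hne (Fin.ext h)
  rw [UG_adj] at hna
  push_neg at hna
  by_cases hu : u.val < k <;> by_cases hv : v.val < k
  · -- both low: pick helper t ∈ {0,1,2} avoiding u.val, v.val
    have ⟨t, ht⟩ : ∃ t : ℕ, t < 3 ∧ t ≠ u.val ∧ t ≠ v.val := by
      by_cases h0 : u.val ≠ 0 ∧ v.val ≠ 0
      · exact ⟨0, by omega⟩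
      · by_cases h1 : u.val ≠ 1 ∧ v.val ≠ 1
        · exact ⟨1, by omega⟩
        · exact ⟨2, by omega⟩
    refine ⟨⟨k + t, by omega⟩, ?_, ?_⟩ <;> rw [UG_adj]
    · exact Or.inl ⟨hu, show k ≤ k + t by omega, show u.val ≠ (k + t) - k by omega⟩
    · exact Or.inl ⟨hv, show k ≤ k + t by omega, show v.val ≠ (k + t) - k by omega⟩
  · -- u low, v high: forced adjacency unless same part; contradiction
    exfalso
    have h3 := (hna.1 hu (by omega))
    apply hP
    unfold UP
    rw [dif_pos hu, dif_neg (by omega)]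
    exact Fin.ext (show u.val = v.val - k by omega)
  · exfalso
    have h3 := (hna.2 hv (by omega))
    apply hP
    unfold UP
    rw [dif_neg (by omega), dif_pos hv]
    exact Fin.ext (show u.val - k = v.val by omega)
  · -- both high: parts u-k ≠ v-k in {0,1,2}; pick j < k avoiding both
    have hparts : u.val - k ≠ v.val - k := by omega
    have ⟨j, hj⟩ : ∃ j : ℕ, j < 3 ∧ j ≠ u.val - k ∧ j ≠ v.val - k := by
      by_cases h0 : u.val - k ≠ 0 ∧ v.val - k ≠ 0
      · exact ⟨0, by omega⟩
      · by_cases h1 : u.val - k ≠ 1 ∧ v.val - k ≠ 1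
        · exact ⟨1, by omega⟩
        · exact ⟨2, by omega⟩
    refine ⟨⟨j, by omega⟩, ?_, ?_⟩ <;> rw [UG_adj]
    · exact Or.inr ⟨show (j:ℕ) < k by omega, by omega, show (j:ℕ) ≠ u.val - k by omega⟩
    · exact Or.inr ⟨show (j:ℕ) < k by omega, by omega, show (j:ℕ) ≠ v.val - k by omega⟩

lemma UG_ncard {k : ℕ} (hk : 3 ≤ k) (i : Fin k) :
    ((UG k).neighborSet (Ux k i)).ncard = if i.val < 3 then 2 else 3 := by
  classical
  have hfin : (UG k).neighborSet (Ux k i) =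
      ↑(Finset.image (fun t : Fin 3 => (⟨k + t.val, by omega⟩ : Fin (k+3)))
        (Finset.univ.filter (fun t : Fin 3 => i.val ≠ t.val))) := by
    ext w
    simp only [mem_neighborSet, Finset.coe_image, Set.mem_image, Finset.mem_coe,
      Finset.mem_filter, Finset.mem_univ, true_and, UG_adj, Ux]
    constructor
    · intro h
      have hw : k ≤ w.val ∧ i.val ≠ w.val - k := by
        rcases h with ⟨h1, h2, h3⟩ | ⟨h1, h2, h3⟩
        · exact ⟨h2, h3⟩
        · exact absurd h2 (by have := i.isLt; omega)
      refine ⟨⟨w.val - k, by have := w.isLt; omega⟩, hw.2, ?_⟩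
      exact Fin.ext (show k + (w.val - k) = w.val by omega)
    · rintro ⟨t, ht, rfl⟩
      exact Or.inl ⟨i.isLt, show k ≤ k + t.val by omega, show i.val ≠ (k + t.val) - k by omega⟩
  rw [hfin, Set.ncard_coe_finset, Finset.card_image_of_injective _ ?hinj]
  case hinj =>
    intro a b hab
    have := congrArg Fin.val hab
    simp only at this
    exact Fin.ext (by omega)
  by_cases h3 : i.val < 3
  · have : i.val = 0 ∨ i.val = 1 ∨ i.val = 2 := by omega
    rcases this with h | h | h <;> rw [h] <;> decide
  · rw [if_neg h3]
    have : (Finset.univ.filter (fun t : Fin 3 => i.val ≠ t.val)) = Finset.univ := by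
      ext t
      simp only [Finset.mem_filter, Finset.mem_univ, true_and, iff_true]
      have := t.isLt; omega
    rw [this]
    decide

lemma sum_deg {k : ℕ} (hk : 3 ≤ k) :
    ∑ i : Fin k, ((UG k).neighborSet (Ux k i)).ncard = 3 * (k - 1) := by
  classical
  have h1 : ∀ i : Fin k, ((UG k).neighborSet (Ux k i)).ncard
      = if i.val < 3 then 2 else 3 := fun i => UG_ncard hk i
  simp only [h1]
  rw [Finset.sum_ite]
  simp only [Finset.sum_const, smul_eq_mul]
  have hc1 : (Finset.univ.filter (fun i : Fin k => i.val < 3)).card = 3 := by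
    have : (Finset.univ.filter (fun i : Fin k => i.val < 3)) =
        {⟨0, by omega⟩, ⟨1, by omega⟩, ⟨2, by omega⟩} := by
      ext i
      simp only [Finset.mem_filter, Finset.mem_univ, true_and, Finset.mem_insert,
        Finset.mem_singleton, Fin.ext_iff]
      omega
    rw [this]
    rw [Finset.card_insert_of_notMem, Finset.card_insert_of_notMem, Finset.card_singleton]
    · simp [Fin.ext_iff]
    · simp [Fin.ext_iff]
  have hc2 : (Finset.univ.filter (fun i : Fin k => i.val < 3)).card
      + (Finset.univ.filter (fun i : Fin k => ¬ i.val < 3)).card = k := by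
    rw [Finset.card_filter_add_card_filter_not]
    simp
  rw [hc1]
  have hc3 : (Finset.univ.filter (fun i : Fin k => ¬ i.val < 3)).card = k - 3 := by omega
  rw [hc3]
  omega

lemma alpha_upper {k : ℕ} (hk : 3 ≤ k) : AlphaWitness k 3 (3 * (k - 1)) := by
  refine ⟨k + 3, UG k, UP k hk, Ux k, ⟨UP_part hk, UG_free k, ?_⟩, ?_, ?_, (sum_deg hk).symm⟩
  · intro u v hP hna hcf
    obtain ⟨w, h1, h2⟩ := UG_common hk u v hP hna
    have hne : u ≠ v := fun h => hP (h ▸ rfl)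
    refine hcf {u, v, w} (SimpleGraph.is3Clique_triple_iff.mpr ⟨?_, ?_, ?_⟩)
    · exact (SimpleGraph.sup_adj _ _ _ _).mpr (Or.inr ((SimpleGraph.fromEdgeSet_adj _).mpr ⟨rfl, hne⟩))
    · exact (SimpleGraph.sup_adj _ _ _ _).mpr (Or.inl h1)
    · exact (SimpleGraph.sup_adj _ _ _ _).mpr (Or.inl h2)
  · intro i
    unfold UP Ux
    rw [dif_pos i.isLt]
  · intro i j
    rw [UG_adj]
    push_neg
    have hi : (Ux k i).val = i.val := rfl
    have hj : (Ux k j).val = j.val := rfl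
    have := i.isLt
    have := j.isLt
    omega

open Finset in
lemma alpha_lower {k m : ℕ} (hk : 3 ≤ k) (hw : AlphaWitness k 3 m) : 3 * (k - 1) ≤ m := by
  classical
  obtain ⟨n, G, P, x, ⟨hpart, hfree, hsat⟩, hPx, hind, hm⟩ := hw
  have noTri : ∀ {a b c : Fin n}, G.Adj a b → G.Adj a c → G.Adj b c → False :=
    fun h1 h2 h3 => noTri' hfree h1 h2 h3
  have key_pair : ∀ i j : Fin k, i ≠ j → ∃ w, G.Adj (x i) w ∧ G.Adj (x j) w := by
    intro i j hij
    exact common_of_sat hfree (hsat _ _ (by rw [hPx, hPx]; exact hij) (hind i j))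
  have key_dom : ∀ (i : Fin k) (v : Fin n), P v ≠ i → ¬ G.Adj (x i) v →
      ∃ w, G.Adj (x i) w ∧ G.Adj v w := by
    intro i v h1 h2
    exact common_of_sat hfree (hsat _ _ (by rw [hPx]; exact fun h => h1 h.symm) h2)
  have hm' : m = ∑ i : Fin k, (G.neighborFinset (x i)).card := by
    rw [hm]
    congr 1; ext i
    rw [neighborFinset_def, Set.ncard_eq_toFinset_card']
  by_cases hcase : ∀ i, 3 ≤ (G.neighborFinset (x i)).card
  · have h1 : (Finset.univ : Finset (Fin k)).card • 3 ≤ ∑ i : Fin k, (G.neighborFinset (x i)).card :=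
      Finset.card_nsmul_le_sum _ _ _ (fun i _ => hcase i)
    simp only [card_univ, Fintype.card_fin, smul_eq_mul] at h1
    omega
  push_neg at hcase
  obtain ⟨i0, hi0⟩ := hcase
  haveI : Nontrivial (Fin k) := Fin.nontrivial_iff_two_le.mpr (by omega)
  obtain ⟨j0, hj0⟩ := exists_ne i0
  set D := G.neighborFinset (x i0) with hDdef
  have hDcard : D.card = 2 := by
    have h1 : 0 < D.card := by
      obtain ⟨w, hw1, _⟩ := key_pair i0 j0 (Ne.symm hj0)
      exact Finset.card_pos.mpr ⟨w, (G.mem_neighborFinset _ _).mpr hw1⟩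
    have h2 : D.card ≠ 1 := by
      intro hone
      obtain ⟨sv, hsv⟩ := Finset.card_eq_one.mp hone
      have hall : ∀ j, G.Adj (x j) sv := by
        intro j
        by_cases hji : j = i0
        · subst hji
          have hmem : sv ∈ D := by rw [hsv]; exact Finset.mem_singleton_self sv
          exact (G.mem_neighborFinset _ _).mp hmem
        · obtain ⟨w, hw1, hw2⟩ := key_pair i0 j (fun h => hji h.symm)
          have : w ∈ D := (G.mem_neighborFinset _ _).mpr hw1
          rw [hsv, Finset.mem_singleton] at this
          exact this ▸ hw2
      have := hpart _ _ (hall (P sv))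
      rw [hPx] at this
      exact this rfl
    omega
  obtain ⟨s, s', hss', hD⟩ := Finset.card_eq_two.mp hDcard
  have hs : G.Adj (x i0) s := by
    have hmem : s ∈ D := by rw [hD]; exact Finset.mem_insert_self _ _
    exact (G.mem_neighborFinset _ _).mp hmem
  have hs' : G.Adj (x i0) s' := by
    have hmem : s' ∈ D := by rw [hD]; exact Finset.mem_insert_of_mem (Finset.mem_singleton_self s')
    exact (G.mem_neighborFinset _ _).mp hmem
  have hcov : ∀ j, G.Adj (x j) s ∨ G.Adj (x j) s' := by
    intro j
    by_cases hji : j = i0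
    · exact Or.inl (hji ▸ hs)
    · obtain ⟨w, hw1, hw2⟩ := key_pair i0 j (fun h => hji h.symm)
      have : w ∈ D := (G.mem_neighborFinset _ _).mpr hw1
      rw [hD, Finset.mem_insert, Finset.mem_singleton] at this
      rcases this with rfl | rfl
      · exact Or.inl hw2
      · exact Or.inr hw2
  have nss' : ¬ G.Adj s s' := fun h => noTri hs hs' h
  set p := P s with hp
  set p' := P s' with hp'
  have hpS : ¬ G.Adj (x p) s := by
    intro h
    have := hpart _ _ h
    rw [hPx] at this
    exact this rfl
  have hp'S' : ¬ G.Adj (x p') s' := by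
    intro h
    have := hpart _ _ h
    rw [hPx] at this
    exact this rfl
  have hpB' : G.Adj (x p) s' := (hcov p).resolve_left hpS
  have hp'A' : G.Adj (x p') s := (hcov p').resolve_right hp'S'
  -- index sets
  set S : Finset (Fin k) := Finset.univ.filter (fun j => G.Adj (x j) s) with hSdef
  set S' : Finset (Fin k) := Finset.univ.filter (fun j => G.Adj (x j) s') with hS'def
  have memS : ∀ j, j ∈ S ↔ G.Adj (x j) s := by intro j; rw [hSdef]; simp
  have memS' : ∀ j, j ∈ S' ↔ G.Adj (x j) s' := by intro j; rw [hS'def]; simp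
  set A : Finset (Fin k) := S \ S' with hAdef
  set B : Finset (Fin k) := S' \ S with hBdef
  set M : Finset (Fin k) := S ∩ S' with hMdef
  have memA : ∀ j, j ∈ A ↔ G.Adj (x j) s ∧ ¬ G.Adj (x j) s' := by
    intro j; rw [hAdef, Finset.mem_sdiff, memS, memS']
  have memB : ∀ j, j ∈ B ↔ G.Adj (x j) s' ∧ ¬ G.Adj (x j) s := by
    intro j; rw [hBdef, Finset.mem_sdiff, memS, memS']
  have memM : ∀ j, j ∈ M ↔ G.Adj (x j) s ∧ G.Adj (x j) s' := by
    intro j; rw [hMdef, Finset.mem_inter, memS, memS']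
  have hp'A : p' ∈ A := (memA p').mpr ⟨hp'A', hp'S'⟩
  have hpB : p ∈ B := (memB p).mpr ⟨hpB', hpS⟩
  have hi0M : i0 ∈ M := (memM i0).mpr ⟨hs, hs'⟩
  have hpp' : p' ≠ p := fun h => hpS (h ▸ hp'A')
  -- vertex-side counting function
  set F : Fin n → ℕ := fun w => (Finset.univ.filter (fun i => G.Adj (x i) w)).card with hFdef
  have hmF : m = ∑ w : Fin n, F w := by
    rw [hm']
    have h1 : ∀ i : Fin k, (G.neighborFinset (x i)).card
        = ∑ w : Fin n, if G.Adj (x i) w then 1 else 0 := by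
      intro i; rw [neighborFinset_eq_filter, Finset.card_filter]
    have h2 : ∀ w : Fin n, F w = ∑ i : Fin k, if G.Adj (x i) w then 1 else 0 := by
      intro w; rw [hFdef]; exact Finset.card_filter _ _
    simp only [h1, h2]
    exact Finset.sum_comm
  set U : Finset (Fin n) := (Finset.univ.erase s).erase s' with hUdef
  have memU : ∀ w, w ∈ U ↔ w ≠ s' ∧ w ≠ s := by
    intro w; rw [hUdef]; simp [Finset.mem_erase]
  have hsplit : m = F s + (F s' + ∑ w ∈ U, F w) := by
    have h2 : F s' + ∑ w ∈ U, F w = ∑ w ∈ Finset.univ.erase s, F w := by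
      rw [hUdef]
      exact Finset.add_sum_erase _ F (Finset.mem_erase.mpr ⟨Ne.symm hss', Finset.mem_univ _⟩)
    have h1 : F s + ∑ w ∈ Finset.univ.erase s, F w = ∑ w : Fin n, F w :=
      Finset.add_sum_erase _ F (Finset.mem_univ s)
    rw [hmF, ← h1, ← h2]
  have hFs : F s = S.card := by rw [hFdef, hSdef]
  have hFs' : F s' = S'.card := by rw [hFdef, hS'def]
  have hSS'univ : S ∪ S' = Finset.univ := by
    ext j; simp only [Finset.mem_union, Finset.mem_univ, iff_true, memS, memS']
    exact hcov j
  have hcard1 : S.card + S'.card = k + M.card := by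
    have h := Finset.card_union_add_card_inter S S'
    rw [hSS'univ, ← hMdef] at h
    simp only [Finset.card_univ, Fintype.card_fin] at h
    omega
  have hcard2 : A.card + M.card = S.card := by
    have h := Finset.card_sdiff_add_card_inter S S'
    rw [← hAdef, ← hMdef] at h; exact h
  have hcard3 : B.card + M.card = S'.card := by
    have h := Finset.card_sdiff_add_card_inter S' S
    rw [← hBdef, Finset.inter_comm, ← hMdef] at h; exact h
  -- restricted counting
  set fU : Fin k → ℕ := fun j => (U.filter (fun w => G.Adj (x j) w)).card with hfUdef
  have hUsum : ∑ w ∈ U, F w = ∑ j : Fin k, fU j := by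
    have h2 : ∀ w, F w = ∑ i : Fin k, if G.Adj (x i) w then 1 else 0 := by
      intro w; rw [hFdef]; exact Finset.card_filter _ _
    have h3 : ∀ j : Fin k, fU j = ∑ w ∈ U, if G.Adj (x j) w then 1 else 0 := by
      intro j; rw [hfUdef]; exact Finset.card_filter _ _
    simp only [h2, h3]
    exact Finset.sum_comm
  -- claims
  have claimA : ∀ j ∈ A, (1 ≤ fU j) ∧ (j ≠ p' → 2 ≤ fU j) := by
    intro j hj
    obtain ⟨hjs, hjs'⟩ := (memA j).mp hj
    have hjp : j ≠ p := fun h => hpS (h ▸ hjs)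
    obtain ⟨c, hc1, hc2⟩ := key_pair j p hjp
    have hcs : c ≠ s := fun h => hpS (h ▸ hc2)
    have hcs' : c ≠ s' := fun h => hjs' (h ▸ hc1)
    have hcU : c ∈ U.filter (fun w => G.Adj (x j) w) :=
      Finset.mem_filter.mpr ⟨(memU c).mpr ⟨hcs', hcs⟩, hc1⟩
    refine ⟨Finset.card_pos.mpr ⟨c, hcU⟩, ?_⟩
    intro hjp'
    obtain ⟨T, hT1, hT2⟩ := key_dom j s' (fun h => hjp' h.symm) hjs'
    have hTs' : T ≠ s' := fun h => G.irrefl (h ▸ hT2)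
    have hTs : T ≠ s := fun h => nss' (h ▸ hT2).symm
    have hTc : T ≠ c := fun h => noTri hpB' (h ▸ hc2 : G.Adj (x p) T).symm.symm hT2
    have hTU : T ∈ U.filter (fun w => G.Adj (x j) w) :=
      Finset.mem_filter.mpr ⟨(memU T).mpr ⟨hTs', hTs⟩, hT1⟩
    exact Finset.one_lt_card.mpr ⟨c, hcU, T, hTU, fun h => hTc h.symm⟩
  have claimB : ∀ j ∈ B, (1 ≤ fU j) ∧ (j ≠ p → 2 ≤ fU j) := by
    intro j hj
    obtain ⟨hjs', hjs⟩ := (memB j).mp hj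
    have hjp' : j ≠ p' := fun h => hp'S' (h ▸ hjs')
    obtain ⟨c, hc1, hc2⟩ := key_pair j p' hjp'
    have hcs' : c ≠ s' := fun h => hp'S' (h ▸ hc2)
    have hcs : c ≠ s := fun h => hjs (h ▸ hc1)
    have hcU : c ∈ U.filter (fun w => G.Adj (x j) w) :=
      Finset.mem_filter.mpr ⟨(memU c).mpr ⟨hcs', hcs⟩, hc1⟩
    refine ⟨Finset.card_pos.mpr ⟨c, hcU⟩, ?_⟩
    intro hjp
    obtain ⟨T, hT1, hT2⟩ := key_dom j s (fun h => hjp h.symm) hjs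
    have hTs : T ≠ s := fun h => G.irrefl (h ▸ hT2)
    have hTs' : T ≠ s' := fun h => nss' (h ▸ hT2)
    have hTc : T ≠ c := fun h => noTri hp'A' (h ▸ hc2 : G.Adj (x p') T) hT2
    have hTU : T ∈ U.filter (fun w => G.Adj (x j) w) :=
      Finset.mem_filter.mpr ⟨(memU T).mpr ⟨hTs', hTs⟩, hT1⟩
    exact Finset.one_lt_card.mpr ⟨c, hcU, T, hTU, fun h => hTc h.symm⟩
  obtain ⟨c0, hc01, hc02⟩ := key_pair p' p hpp'
  have hc0s : c0 ≠ s := fun h => hpS (h ▸ hc02)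
  have hc0s' : c0 ≠ s' := fun h => hp'S' (h ▸ hc01)
  set q0 := P c0 with hq0
  have claimM : ∀ j ∈ M, j ≠ q0 → 1 ≤ fU j := by
    intro j hj hjq
    by_cases hadj : G.Adj (x j) c0
    · exact Finset.card_pos.mpr ⟨c0, Finset.mem_filter.mpr ⟨(memU c0).mpr ⟨hc0s', hc0s⟩, hadj⟩⟩
    · obtain ⟨T, hT1, hT2⟩ := key_dom j c0 (fun h => hjq h.symm) hadj
      have hTs : T ≠ s := fun h => noTri hc01 hp'A' (h ▸ hT2)
      have hTs' : T ≠ s' := fun h => noTri hc02 hpB' (h ▸ hT2)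
      exact Finset.card_pos.mpr ⟨T, Finset.mem_filter.mpr ⟨(memU T).mpr ⟨hTs', hTs⟩, hT1⟩⟩
  -- sum bounds
  have hsumA : 2 * A.card ≤ (∑ j ∈ A, fU j) + 1 := by
    have e1 : fU p' + ∑ j ∈ A.erase p', fU j = ∑ j ∈ A, fU j := Finset.add_sum_erase _ _ hp'A
    have e2 : (A.erase p').card • 2 ≤ ∑ j ∈ A.erase p', fU j :=
      Finset.card_nsmul_le_sum _ _ _
        (fun j hj => (claimA j (Finset.mem_of_mem_erase hj)).2 (Finset.ne_of_mem_erase hj))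
    have e3 : (A.erase p').card = A.card - 1 := Finset.card_erase_of_mem hp'A
    have e4 : 1 ≤ fU p' := (claimA p' hp'A).1
    have e5 : 1 ≤ A.card := Finset.card_pos.mpr ⟨p', hp'A⟩
    simp only [smul_eq_mul] at e2
    omega
  have hsumB : 2 * B.card ≤ (∑ j ∈ B, fU j) + 1 := by
    have e1 : fU p + ∑ j ∈ B.erase p, fU j = ∑ j ∈ B, fU j := Finset.add_sum_erase _ _ hpB
    have e2 : (B.erase p).card • 2 ≤ ∑ j ∈ B.erase p, fU j :=
      Finset.card_nsmul_le_sum _ _ _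
        (fun j hj => (claimB j (Finset.mem_of_mem_erase hj)).2 (Finset.ne_of_mem_erase hj))
    have e3 : (B.erase p).card = B.card - 1 := Finset.card_erase_of_mem hpB
    have e4 : 1 ≤ fU p := (claimB p hpB).1
    have e5 : 1 ≤ B.card := Finset.card_pos.mpr ⟨p, hpB⟩
    simp only [smul_eq_mul] at e2
    omega
  have hsumM : M.card ≤ (∑ j ∈ M, fU j) + 1 := by
    have e2 : (M.erase q0).card • 1 ≤ ∑ j ∈ M.erase q0, fU j :=
      Finset.card_nsmul_le_sum _ _ _
        (fun j hj => claimM j (Finset.mem_of_mem_erase hj) (Finset.ne_of_mem_erase hj))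
    have e1 : ∑ j ∈ M.erase q0, fU j ≤ ∑ j ∈ M, fU j :=
      Finset.sum_le_sum_of_subset (Finset.erase_subset _ _)
    have e3 : M.card - 1 ≤ (M.erase q0).card := Finset.pred_card_le_card_erase
    simp only [smul_eq_mul, mul_one] at e2
    omega
  -- partition of the index sum
  have hdisj1 : Disjoint A B := by
    rw [Finset.disjoint_left]
    intro j hjA hjB
    exact ((memB j).mp hjB).2 ((memA j).mp hjA).1
  have hdisj2 : Disjoint (A ∪ B) M := by
    rw [Finset.disjoint_left]
    intro j hjAB hjM
    rcases Finset.mem_union.mp hjAB with h | h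
    · exact ((memA j).mp h).2 ((memM j).mp hjM).2
    · exact ((memB j).mp h).2 ((memM j).mp hjM).1
  have hunion : (A ∪ B) ∪ M = Finset.univ := by
    ext j
    simp only [Finset.mem_union, Finset.mem_univ, iff_true, memA, memB, memM]
    rcases hcov j with h | h <;> by_cases h2 : G.Adj (x j) s <;> by_cases h3 : G.Adj (x j) s' <;> tauto
  have hpartsum : ∑ j : Fin k, fU j = ((∑ j ∈ A, fU j) + (∑ j ∈ B, fU j)) + (∑ j ∈ M, fU j) := by
    rw [← hunion, Finset.sum_union hdisj2, Finset.sum_union hdisj1]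
  omega

theorem stmt_15 (k : ℕ) (hk : 3 ≤ k) : alpha k 3 = 3 * (k - 1) := by
  refine le_antisymm (Nat.sInf_le (alpha_upper hk)) ?_
  exact le_csInf ⟨_, alpha_upper hk⟩ (fun m hm => alpha_lower hk hm)
end

section
/- Let r ≥ 4 and let G be a K_r-partite-saturated r-partite graph with parts V_1,...,V_r containing an independent set X = {x_1,...,x_r} with x_i ∈ V_i. Call y ∈ V_i \ {x_i} 'i'-special' if y is the only neighbor of x_{i'} in V_i. Then: (a) a special vertex y ∈ V_i is adjacent to every x_j with j ≠ i; (b) each part V_i contains at most one special vertex. -/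
open SimpleGraph

lemma aux_a {V : Type} [Fintype V] (r : ℕ)
    (G : SimpleGraph V) (P : V → Fin r) (x : Fin r → V)
    (hpart : ∀ u v, G.Adj u v → P u ≠ P v)
    (hfree : G.CliqueFree r)
    (hsat : ∀ u v, P u ≠ P v → ¬ G.Adj u v →
      ¬ (G ⊔ SimpleGraph.fromEdgeSet {s(u, v)}).CliqueFree r)
    (hx : ∀ i, P (x i) = i)
    (hind : ∀ i j, ¬ G.Adj (x i) (x j)) :
    ∀ y : V, ∀ i' : Fin r,
      G.Adj (x i') y → (∀ z, P z = P y → G.Adj (x i') z → z = y) →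
      ∀ j : Fin r, j ≠ P y → G.Adj y (x j) := by
  intro y i' hadj huniq j hj
  by_cases hji : j = i'
  · subst hji; exact hadj.symm
  have hPi' : P (x i') ≠ P y := hpart _ _ hadj
  have hPne : P (x i') ≠ P (x j) := by
    rw [hx, hx]; exact fun h => hji h.symm
  have hnot := hsat (x i') (x j) hPne (hind i' j)
  rw [CliqueFree] at hnot
  push_neg at hnot
  obtain ⟨K, hK⟩ := hnot
  set H := G ⊔ SimpleGraph.fromEdgeSet {s(x i', x j)} with hH
  have hHadj : ∀ a b, H.Adj a b → G.Adj a b ∨ ((a = x i' ∧ b = x j) ∨ (a = x j ∧ b = x i')) := by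
    intro a b hab
    rcases hab with h | h
    · exact Or.inl h
    · obtain ⟨hmem, hne⟩ := h
      exact Or.inr (Sym2.eq_iff.mp hmem)
  have hHpart : ∀ u v, H.Adj u v → P u ≠ P v := by
    intro u v huv
    rcases hHadj u v huv with h | ⟨h1, h2⟩ | ⟨h1, h2⟩
    · exact hpart u v h
    · subst h1; subst h2; exact hPne
    · subst h1; subst h2; exact hPne.symm
  -- both endpoints are in K
  have hboth : x i' ∈ K ∧ x j ∈ K := by
    by_contra hcon
    apply hfree K
    constructor
    · intro a ha b hb hne
      rcases hHadj a b (hK.1 ha hb hne) with h | ⟨h1, h2⟩ | ⟨h1, h2⟩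
      · exact h
      · exact absurd ⟨h1 ▸ ha, h2 ▸ hb⟩ hcon
      · exact absurd ⟨h2 ▸ hb, h1 ▸ ha⟩ hcon
    · exact hK.2
  obtain ⟨hiK, hjK⟩ := hboth
  -- P is injective on K, hence surjective: find u ∈ K with P u = P y
  have hinj : Set.InjOn P ↑K := by
    intro a ha b hb hab
    by_contra hne
    exact hHpart a b (hK.1 ha hb hne) hab
  have himg : (K.image P).card = r := by
    rw [Finset.card_image_of_injOn hinj, hK.2]
  have himgu : K.image P = Finset.univ :=
    Finset.eq_univ_of_card _ (by simp [himg])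
  have hmem : P y ∈ K.image P := by rw [himgu]; exact Finset.mem_univ _
  obtain ⟨u, huK, hup⟩ := Finset.mem_image.mp hmem
  have hune1 : u ≠ x i' := fun h => hPi' (by rw [← h, hup])
  have hune2 : u ≠ x j := fun h => hj (by rw [← hup, h, hx])
  -- u is a G-neighbor of x i' in part P y, so u = y
  have hadj2 : H.Adj (x i') u := hK.1 (by exact_mod_cast hiK) (by exact_mod_cast huK) (fun h => hune1 h.symm)
  have hGu : G.Adj (x i') u := by
    rcases hHadj _ _ hadj2 with h | ⟨h1, h2⟩ | ⟨h1, h2⟩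
    · exact h
    · exact absurd h2 hune2
    · exact absurd (congrArg P h1) hPne
  have huy : u = y := huniq u hup hGu
  subst huy
  -- y adjacent to x j in H, and not via the new edge
  have hadj3 : H.Adj u (x j) := hK.1 (by exact_mod_cast huK) (by exact_mod_cast hjK) hune2
  rcases hHadj _ _ hadj3 with h | ⟨h1, h2⟩ | ⟨h1, h2⟩
  · exact h
  · exact absurd h1 hune1
  · exact absurd h1 hune2

theorem stmt_16 {V : Type} [Fintype V] (r : ℕ) (hr : 4 ≤ r)
    (G : SimpleGraph V) (P : V → Fin r) (x : Fin r → V)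
    (hpart : ∀ u v, G.Adj u v → P u ≠ P v)
    (hfree : G.CliqueFree r)
    (hsat : ∀ u v, P u ≠ P v → ¬ G.Adj u v →
      ¬ (G ⊔ SimpleGraph.fromEdgeSet {s(u, v)}).CliqueFree r)
    (hx : ∀ i, P (x i) = i)
    (hind : ∀ i j, ¬ G.Adj (x i) (x j)) :
    -- (a) a special vertex y is adjacent to every x j with j ≠ P y
    (∀ y : V, ∀ i' : Fin r,
      G.Adj (x i') y → (∀ z, P z = P y → G.Adj (x i') z → z = y) →
      ∀ j : Fin r, j ≠ P y → G.Adj y (x j)) ∧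
    -- (b) each part contains at most one special vertex
    (∀ y z : V,
      (∃ i', G.Adj (x i') y ∧ ∀ w, P w = P y → G.Adj (x i') w → w = y) →
      (∃ j', G.Adj (x j') z ∧ ∀ w, P w = P z → G.Adj (x j') w → w = z) →
      P y = P z → y = z) := by
  have hA := aux_a r G P x hpart hfree hsat hx hind
  refine ⟨hA, ?_⟩
  rintro y z ⟨i', hi'adj, hi'uniq⟩ ⟨j', hj'adj, hj'uniq⟩ hPyz
  have hj'ne : j' ≠ P y := by
    intro h
    exact hpart _ _ hj'adj (by rw [hx, h, hPyz])
  have hyj' : G.Adj y (x j') := hA y i' hi'adj hi'uniq j' hj'ne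
  exact hj'uniq y hPyz hyj'.symm
end

section
/- Let r ≥ 4 and let G be a K_r-partite-saturated r-partite graph with parts V_1,...,V_r containing an independent set X = {x_1,...,x_r} with x_i ∈ V_i. The special degree of a vertex y outside X is the number of indices i such that y is the unique neighbor of x_i in its part. Then the number of vertices of special degree at least 2 is at most r - 2. -/
open SimpleGraph

/-- From saturation: adding the edge `x c -- x d` yields an `r`-clique `t` containing both
endpoints, with one vertex in each part, and all pairs other than `(x c, x d)` adjacent in `G`. -/
lemma aux_sat {V : Type} [Fintype V] {r : ℕ}
    {G : SimpleGraph V} {P : V → Fin r} {x : Fin r → V}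
    (hpart : ∀ u v, G.Adj u v → P u ≠ P v)
    (hfree : G.CliqueFree r)
    (hsat : ∀ u v, P u ≠ P v → ¬ G.Adj u v →
      ¬ (G ⊔ SimpleGraph.fromEdgeSet {s(u, v)}).CliqueFree r)
    (hx : ∀ i, P (x i) = i)
    (hind : ∀ i j, ¬ G.Adj (x i) (x j))
    (c d : Fin r) (hcd : c ≠ d) :
    ∃ t : Finset V, x c ∈ t ∧ x d ∈ t ∧
      (∀ u ∈ t, ∀ v ∈ t, u ≠ v → ¬(u = x c ∧ v = x d) → ¬(u = x d ∧ v = x c) → G.Adj u v) ∧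
      (∀ j : Fin r, ∃ z ∈ t, P z = j) := by
  have hP : P (x c) ≠ P (x d) := by rw [hx, hx]; exact hcd
  have h := hsat (x c) (x d) hP (hind c d)
  rw [CliqueFree] at h
  push_neg at h
  obtain ⟨t, ht⟩ := h
  have hG'adj : ∀ u v, (G ⊔ SimpleGraph.fromEdgeSet {s(x c, x d)}).Adj u v →
      G.Adj u v ∨ (u = x c ∧ v = x d) ∨ (u = x d ∧ v = x c) := by
    intro u v huv
    rcases huv with huv | huv
    · exact Or.inl huv
    · rw [fromEdgeSet_adj] at huv
      have := huv.1
      rw [Set.mem_singleton_iff, Sym2.eq_iff] at this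
      exact Or.inr this
  have hmem : x c ∈ t ∧ x d ∈ t := by
    by_contra hcon
    refine hfree t ⟨?_, ht.2⟩
    intro u hu v hv huv
    rcases hG'adj u v (ht.1 hu hv huv) with h | ⟨rfl, rfl⟩ | ⟨rfl, rfl⟩
    · exact h
    · exact absurd ⟨hu, hv⟩ hcon
    · exact absurd ⟨hv, hu⟩ hcon
  have hadj : ∀ u ∈ t, ∀ v ∈ t, u ≠ v → ¬(u = x c ∧ v = x d) → ¬(u = x d ∧ v = x c) →
      G.Adj u v := by
    intro u hu v hv huv h1 h2
    rcases hG'adj u v (ht.1 hu hv huv) with h | h | h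
    · exact h
    · exact absurd h h1
    · exact absurd h h2
  refine ⟨t, hmem.1, hmem.2, hadj, ?_⟩
  have hinj : Set.InjOn P ↑t := by
    intro u hu v hv hPuv
    by_contra hne
    rcases hG'adj u v (ht.1 hu hv hne) with h | ⟨rfl, rfl⟩ | ⟨rfl, rfl⟩
    · exact hpart u v h hPuv
    · exact hP hPuv
    · exact hP hPuv.symm
  have himg : t.image P = Finset.univ := by
    apply Finset.eq_univ_of_card
    rw [Finset.card_image_of_injOn hinj, ht.2, Fintype.card_fin]
  intro j
  have : j ∈ t.image P := by rw [himg]; exact Finset.mem_univ j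
  rcases Finset.mem_image.mp this with ⟨z, hz, hPz⟩
  exact ⟨z, hz, hPz⟩

/-- If `y` is `a`-special with `a ∈ {c, d}` and `y`'s part avoids `c, d`, then `y` belongs to the
clique created by adding `x c -- x d`. -/
lemma aux_pin {V : Type} [Fintype V] {r : ℕ}
    {G : SimpleGraph V} {P : V → Fin r} {x : Fin r → V}
    (hpart : ∀ u v, G.Adj u v → P u ≠ P v)
    (hx : ∀ i, P (x i) = i)
    {c d : Fin r} {t : Finset V}
    (htc : x c ∈ t) (htd : x d ∈ t)
    (hadj : ∀ u ∈ t, ∀ v ∈ t, u ≠ v → ¬(u = x c ∧ v = x d) → ¬(u = x d ∧ v = x c) → G.Adj u v)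
    (hsurj : ∀ j : Fin r, ∃ z ∈ t, P z = j)
    {y : V} (hyc : P y ≠ c) (hyd : P y ≠ d)
    {a : Fin r} (ha : a = c ∨ a = d)
    (haspec : G.Adj (x a) y ∧ ∀ z, P z = P y → G.Adj (x a) z → z = y) :
    y ∈ t := by
  obtain ⟨z, hzt, hPz⟩ := hsurj (P y)
  have hzc : z ≠ x c := fun h => hyc (by rw [h, hx] at hPz; exact hPz.symm)
  have hzd : z ≠ x d := fun h => hyd (by rw [h, hx] at hPz; exact hPz.symm)
  have hay : a ≠ P y := by have := hpart _ _ haspec.1; rw [hx] at this; exact this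
  have hxat : x a ∈ t := by rcases ha with rfl | rfl <;> assumption
  have hza : x a ≠ z := fun h => hay (by rw [← h, hx] at hPz; exact hPz)
  have hGaz : G.Adj (x a) z := by
    refine hadj (x a) hxat z hzt hza ?_ ?_
    · rintro ⟨-, h⟩; exact hzd h
    · rintro ⟨-, h⟩; exact hzc h
  have := haspec.2 z hPz hGaz
  rwa [← this]

theorem stmt_17 {V : Type} [Fintype V] (r : ℕ) (hr : 4 ≤ r)
    (G : SimpleGraph V) (P : V → Fin r) (x : Fin r → V)
    (hpart : ∀ u v, G.Adj u v → P u ≠ P v)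
    (hfree : G.CliqueFree r)
    (hsat : ∀ u v, P u ≠ P v → ¬ G.Adj u v →
      ¬ (G ⊔ SimpleGraph.fromEdgeSet {s(u, v)}).CliqueFree r)
    (hx : ∀ i, P (x i) = i)
    (hind : ∀ i j, ¬ G.Adj (x i) (x j)) :
    {y : V | y ∉ Set.range x ∧
      2 ≤ {i : Fin r | G.Adj (x i) y ∧ ∀ z, P z = P y → G.Adj (x i) z → z = y}.ncard}.ncard
      ≤ r - 2 := by
  classical
  set Sp : V → Set (Fin r) :=
    fun y => {i : Fin r | G.Adj (x i) y ∧ ∀ z, P z = P y → G.Adj (x i) z → z = y} with hSp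
  set D : Set V := {y : V | y ∉ Set.range x ∧ 2 ≤ (Sp y).ncard} with hD
  show D.ncard ≤ r - 2
  -- each element of D has two distinct special indices
  have htwo : ∀ y ∈ D, ∃ a b, a ∈ Sp y ∧ b ∈ Sp y ∧ a ≠ b := by
    intro y hy
    have h2 := hy.2
    exact (Set.one_lt_ncard_iff (Set.toFinite _)).mp (by omega)
  have hspne : ∀ y, ∀ a ∈ Sp y, a ≠ P y := by
    intro y a hay
    have := hpart _ _ hay.1
    rw [hx] at this
    exact this
  -- step 1: distinct elements of D are adjacent
  have hadjD : ∀ y ∈ D, ∀ y' ∈ D, y ≠ y' → G.Adj y y' := by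
    intro y hy y' hy' hne
    obtain ⟨a₁, a₂, ha₁, ha₂, ha12⟩ := htwo y hy
    obtain ⟨b₁, b₂, hb₁, hb₂, hb12⟩ := htwo y' hy'
    -- choose a ∈ Sp y, a ≠ P y'
    obtain ⟨a, haS, haPy'⟩ : ∃ a ∈ Sp y, a ≠ P y' := by
      by_cases h : a₁ = P y'
      · exact ⟨a₂, ha₂, fun hh => ha12 (h ▸ hh ▸ rfl)⟩
      · exact ⟨a₁, ha₁, h⟩
    have haPy : a ≠ P y := hspne y a haS
    -- choose c d
    obtain ⟨c, d, hcd, hcy, hcy', hdy, hdy', hcS, hdS⟩ :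
        ∃ c d : Fin r, c ≠ d ∧ c ≠ P y ∧ c ≠ P y' ∧ d ≠ P y ∧ d ≠ P y' ∧
          (c ∈ Sp y ∨ d ∈ Sp y) ∧ (c ∈ Sp y' ∨ d ∈ Sp y') := by
      by_cases hb : ∃ b ∈ Sp y', b ≠ P y ∧ b ≠ a
      · obtain ⟨b, hbS, hbPy, hba⟩ := hb
        exact ⟨a, b, fun h => hba h.symm, haPy, haPy', hbPy,
          hspne y' b hbS, Or.inl haS, Or.inr hbS⟩
      · push_neg at hb
        -- then Sp y' ⊆ {P y, a}, so a ∈ Sp y'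
        have key : a ∈ Sp y' := by
          have h1 : b₁ = P y ∨ b₁ = a := by
            by_cases e : b₁ = P y
            · exact Or.inl e
            · exact Or.inr (hb b₁ hb₁ e)
          have h2 : b₂ = P y ∨ b₂ = a := by
            by_cases e : b₂ = P y
            · exact Or.inl e
            · exact Or.inr (hb b₂ hb₂ e)
          rcases h1 with e1 | e1
          · rcases h2 with e2 | e2
            · exact absurd (e1.trans e2.symm) hb12
            · exact e2 ▸ hb₂
          · exact e1 ▸ hb₁
        -- pick fresh d
        obtain ⟨d, hd⟩ : ∃ d : Fin r, d ∉ ({a, P y, P y'} : Finset (Fin r)) := by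
          by_contra hcon
          push_neg at hcon
          have hsub : (Finset.univ : Finset (Fin r)) ⊆ {a, P y, P y'} :=
            fun z _ => hcon z
          have := Finset.card_le_card hsub
          have h3 : ({a, P y, P y'} : Finset (Fin r)).card ≤ 3 := by
            apply le_trans (Finset.card_insert_le _ _)
            apply Nat.succ_le_succ
            apply le_trans (Finset.card_insert_le _ _)
            simp
          rw [Finset.card_univ, Fintype.card_fin] at this
          omega
        simp only [Finset.mem_insert, Finset.mem_singleton] at hd
        push_neg at hd
        exact ⟨a, d, fun h => hd.1 h.symm, haPy, haPy', fun h => hd.2.1 h,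
          fun h => hd.2.2 h, Or.inl haS, Or.inl key⟩
    obtain ⟨t, htc, htd, hadjt, hsurj⟩ := aux_sat hpart hfree hsat hx hind c d hcd
    have hyt : y ∈ t := by
      rcases hcS with h | h
      · exact aux_pin hpart hx htc htd hadjt hsurj (Ne.symm hcy) (Ne.symm hdy) (Or.inl rfl) h
      · exact aux_pin hpart hx htc htd hadjt hsurj (Ne.symm hcy) (Ne.symm hdy) (Or.inr rfl) h
    have hy't : y' ∈ t := by
      rcases hdS with h | h
      · exact aux_pin hpart hx htc htd hadjt hsurj (Ne.symm hcy') (Ne.symm hdy') (Or.inl rfl) h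
      · exact aux_pin hpart hx htc htd hadjt hsurj (Ne.symm hcy') (Ne.symm hdy') (Or.inr rfl) h
    refine hadjt y hyt y' hy't hne ?_ ?_
    · rintro ⟨h, -⟩; exact hy.1 ⟨c, h.symm⟩
    · rintro ⟨h, -⟩; exact hy.1 ⟨d, h.symm⟩
  -- step 2: conclude
  by_contra hcon
  push_neg at hcon
  have hge : r - 1 ≤ D.ncard := by omega
  have hfin : D.Finite := Set.toFinite D
  obtain ⟨F', hF'sub, hF'card⟩ := Finset.exists_subset_card_eq
    (show r - 1 ≤ hfin.toFinset.card by rwa [Set.ncard_eq_toFinset_card D hfin] at hge)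
  have hF'D : ∀ w ∈ F', w ∈ D := fun w hw => hfin.mem_toFinset.mp (hF'sub hw)
  -- P is injective on F'
  have hinj : Set.InjOn P ↑F' := by
    intro u hu v hv hPuv
    by_contra hne
    exact hpart u v (hadjD u (hF'D u hu) v (hF'D v hv) hne) hPuv
  -- missing part m
  obtain ⟨m, hm⟩ : ∃ m : Fin r, m ∉ F'.image P := by
    by_contra hcon2
    push_neg at hcon2
    have hsub : (Finset.univ : Finset (Fin r)) ⊆ F'.image P := fun z _ => hcon2 z
    have := Finset.card_le_card hsub
    rw [Finset.card_univ, Fintype.card_fin, Finset.card_image_of_injOn hinj, hF'card] at this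
    omega
  have hPm : ∀ w ∈ F', P w ≠ m := by
    intro w hw h
    exact hm (Finset.mem_image.mpr ⟨w, hw, h⟩)
  -- every w ∈ F' is adjacent to x m
  have hxm : ∀ w ∈ F', G.Adj w (x m) := by
    intro w hw
    obtain ⟨a₁, a₂, ha₁, ha₂, ha12⟩ := htwo w (hF'D w hw)
    obtain ⟨a, haS, ham⟩ : ∃ a ∈ Sp w, a ≠ m := by
      by_cases h : a₁ = m
      · exact ⟨a₂, ha₂, fun hh => ha12 (h ▸ hh ▸ rfl)⟩
      · exact ⟨a₁, ha₁, h⟩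
    obtain ⟨t, hta, htm, hadjt, hsurj⟩ := aux_sat hpart hfree hsat hx hind a m ham
    have hwt : w ∈ t :=
      aux_pin hpart hx hta htm hadjt hsurj (Ne.symm (hspne w a haS)) (hPm w hw)
        (Or.inl rfl) haS
    have hwr : w ∉ Set.range x := (hF'D w hw).1
    refine hadjt w hwt (x m) htm ?_ ?_ ?_
    · intro h; exact hwr ⟨m, h.symm⟩
    · rintro ⟨h, -⟩; exact hwr ⟨a, h.symm⟩
    · rintro ⟨h, -⟩; exact hwr ⟨m, h.symm⟩
  -- build the r-clique
  have hxmF : x m ∉ F' := by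
    intro h
    exact (hF'D _ h).1 ⟨m, rfl⟩
  refine hfree (insert (x m) F') ⟨?_, ?_⟩
  · intro u hu v hv hne
    simp only [Finset.coe_insert, Set.mem_insert_iff, Finset.mem_coe] at hu hv
    rcases hu with rfl | hu <;> rcases hv with rfl | hv
    · exact absurd rfl hne
    · exact (hxm v hv).symm
    · exact hxm u hu
    · exact hadjD u (hF'D u hu) v (hF'D v hv) hne
  · rw [Finset.card_insert_of_notMem hxmF, hF'card]
    omega
end

section
/- For all r1, r2 ≥ 3, β_2(r1 + r2, r1 + r2 - 1) ≤ β_2(r1, r1 - 1) + β_2(r2, r2 - 1) + 6. -/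
open SimpleGraph

open Finset
lemma clique_card_lt {α : Type*} {G : SimpleGraph α} {m : ℕ} (h : G.CliqueFree m)
    {T : Finset α} (hT : G.IsClique (T : Set α)) : T.card < m := by
  by_contra hle
  push_neg at hle
  obtain ⟨T', hsub, hcard⟩ := Finset.exists_subset_card_eq hle
  exact h T' ⟨hT.subset (by exact_mod_cast hsub), hcard⟩

lemma betaWitness_of_card {V : Type} [Fintype V] [DecidableEq V] [Nonempty V] {i k r n : ℕ}
    (hn : Fintype.card V = n)
    (G : SimpleGraph V) (P : V → Fin k)
    (hP : ∀ u v, G.Adj u v → P u ≠ P v) (hF : G.CliqueFree r)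
    (hC : ∀ S : Finset (Fin k), S.card = i →
      ∃ T : Finset V, G.IsNClique (r-1) T ∧ ∀ v ∈ T, P v ∉ S) :
    BetaWitness i k r n := by
  obtain e := Fintype.equivFinOfCardEq hn
  refine ⟨G.map e.toEmbedding, P ∘ e.symm, ?_, ?_, ?_⟩
  · rintro u v ⟨-, a, b, hab, rfl, rfl⟩
    simpa using hP a b hab
  · exact cliqueFree_map_iff.2 hF
  · intro S hS
    obtain ⟨T, hT, hTS⟩ := hC S hS
    refine ⟨T.map e.toEmbedding, hT.map, ?_⟩
    intro v hv
    simp only [Finset.mem_map] at hv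
    obtain ⟨a, ha, rfl⟩ := hv
    simpa using hTS a ha

def RR (r : ℕ) (u v : Fin r × Fin r × Fin r) : Prop :=
  u.1 = v.1 ∧ u.2.1 = v.2.1 ∧ u.1 ≠ u.2.1 ∧ u.2.2 ≠ u.1 ∧ u.2.2 ≠ u.2.1 ∧
    v.2.2 ≠ v.1 ∧ v.2.2 ≠ v.2.1

lemma adj_facts (r : ℕ) (u v : Fin r × Fin r × Fin r)
    (h : (SimpleGraph.fromRel (RR r)).Adj u v) :
    u.1 = v.1 ∧ u.2.1 = v.2.1 ∧ u.1 ≠ u.2.1 ∧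
      u.2.2 ≠ u.1 ∧ u.2.2 ≠ u.2.1 ∧ v.2.2 ≠ v.1 ∧ v.2.2 ≠ v.2.1 ∧ u.2.2 ≠ v.2.2 := by
  obtain ⟨hne, h | h⟩ := h <;>
  · obtain ⟨u1, u2, u3⟩ := u
    obtain ⟨v1, v2, v3⟩ := v
    obtain ⟨h1, h2, h3, h4, h5, h6, h7⟩ := h
    simp only at *
    subst h1; subst h2
    refine ⟨rfl, rfl, ?_, ?_, ?_, ?_, ?_, fun hh => hne ?_⟩ <;> first
      | assumption
      | (subst hh; rfl)

lemma base_witness (r : ℕ) (hr : 3 ≤ r) : ∃ n, BetaWitness 2 r (r - 1) n := by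
  haveI : NeZero r := ⟨by omega⟩
  refine ⟨_, betaWitness_of_card rfl (SimpleGraph.fromRel (RR r)) (fun u => u.2.2) ?_ ?_ ?_⟩
  · intro u v h
    exact (adj_facts r u v h).2.2.2.2.2.2.2
  · -- CliqueFree (r-1)
    intro T hT
    have hcard : T.card = r - 1 := hT.2
    have h2 : 1 < T.card := by omega
    obtain ⟨u0, hu0, v0, hv0, hne⟩ := Finset.one_lt_card.mp h2
    have hadj0 := adj_facts r u0 v0 (hT.1 hu0 hv0 hne)
    -- every w in T has first coords u0.1, u0.2.1 and third coord avoiding them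
    have key : ∀ w ∈ T, w.1 = u0.1 ∧ w.2.1 = u0.2.1 ∧ w.2.2 ≠ u0.1 ∧ w.2.2 ≠ u0.2.1 := by
      intro w hw
      by_cases hwu : w = u0
      · subst hwu
        exact ⟨rfl, rfl, hadj0.2.2.2.1, hadj0.2.2.2.2.1⟩
      · have h := adj_facts r w u0 (hT.1 hw hu0 hwu)
        refine ⟨h.1, h.2.1, ?_, ?_⟩
        · rw [← h.1]; exact h.2.2.2.1
        · rw [← h.2.1]; exact h.2.2.2.2.1
    have hinj : Set.InjOn (fun w : Fin r × Fin r × Fin r => w.2.2) T := by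
      intro a ha b hb hab
      by_contra hne2
      exact (adj_facts r a b (hT.1 ha hb hne2)).2.2.2.2.2.2.2 hab
    have himg : T.image (fun w => w.2.2) ⊆ (univ.erase u0.1).erase u0.2.1 := by
      intro j hj
      obtain ⟨w, hw, rfl⟩ := Finset.mem_image.mp hj
      obtain ⟨_, _, h3, h4⟩ := key w hw
      simp [Finset.mem_erase, h3, h4]
    have hle := Finset.card_le_card himg
    rw [Finset.card_image_of_injOn hinj] at hle
    have hmem : u0.2.1 ∈ univ.erase u0.1 := Finset.mem_erase.mpr ⟨Ne.symm hadj0.2.2.1, mem_univ _⟩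
    have hcard2 : ((univ.erase u0.1).erase u0.2.1).card = r - 2 := by
      rw [Finset.card_erase_of_mem hmem, Finset.card_erase_of_mem (mem_univ _),
        Finset.card_univ, Fintype.card_fin]
      omega
    omega
  · -- cliques avoiding any two parts
    intro S hS
    obtain ⟨p, q, hpq, rfl⟩ := Finset.card_eq_two.mp hS
    refine ⟨(univ \ {p, q}).map ⟨fun j => (p, q, j), fun a b h => by simpa using h⟩,
      ⟨?_, ?_⟩, ?_⟩
    · intro u hu v hv hne
      simp only [Finset.coe_map, Set.mem_image, Finset.mem_coe, Finset.mem_map,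
        Function.Embedding.coeFn_mk, Finset.coe_sdiff, Set.mem_diff] at hu hv
      obtain ⟨a, ha, rfl⟩ := hu
      obtain ⟨b, hb, rfl⟩ := hv
      simp only [Finset.mem_sdiff, Finset.mem_insert, Finset.mem_singleton, mem_univ,
        true_and, not_or] at ha hb
      exact ⟨hne, Or.inl ⟨rfl, rfl, hpq, fun h => ha.1 h, fun h => ha.2 h,
        fun h => hb.1 h, fun h => hb.2 h⟩⟩
    · rw [Finset.card_map, Finset.card_sdiff_of_subset (by simp), Finset.card_univ]
      simp only [Fintype.card_fin]
      rw [Finset.card_pair hpq]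
      omega
    · intro v hv
      simp only [Finset.mem_map, Function.Embedding.coeFn_mk] at hv
      obtain ⟨a, ha, rfl⟩ := hv
      exact (Finset.mem_sdiff.mp ha).2
abbrev extRel (a b : ℕ) : Prop :=
  (a, b) ∈ [(0,1),(1,0),(3,4),(4,3),(0,3),(3,0),(1,4),(4,1),(2,5),(5,2)]

lemma ext_symm : ∀ x y : Fin 6, extRel x.val y.val → extRel y.val x.val := by decide

lemma ext_ne : ∀ x y : Fin 6, extRel x.val y.val → x ≠ y := by decide

lemma ext_tri' : ∀ x y z : Fin 6,
    (extRel x.val y.val ∨ extRel y.val x.val) →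
    (extRel x.val z.val ∨ extRel z.val x.val) →
    (extRel y.val z.val ∨ extRel z.val y.val) → False := by decide

lemma ext_cases : ∀ x y : Fin 6, extRel x.val y.val →
    (x.val, y.val) = (0,1) ∨ (x.val, y.val) = (1,0) ∨ (x.val, y.val) = (3,4) ∨
    (x.val, y.val) = (4,3) ∨ (x.val, y.val) = (0,3) ∨ (x.val, y.val) = (3,0) ∨
    (x.val, y.val) = (1,4) ∨ (x.val, y.val) = (4,1) ∨ (x.val, y.val) = (2,5) ∨
    (x.val, y.val) = (5,2) := by decide

lemma ext_match : ∀ i : Fin 3, extRel i.val (i.val + 3) := by decide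

section Combine

variable {r1 r2 n1 n2 : ℕ}

def Q (h1 : 3 ≤ r1) (h2 : 3 ≤ r2) (P1 : Fin n1 → Fin r1) (P2 : Fin n2 → Fin r2) :
    Fin n1 ⊕ Fin n2 ⊕ Fin 6 → Fin (r1 + r2)
  | .inl a => Fin.castAdd r2 (P1 a)
  | .inr (.inl b) => Fin.natAdd r1 (P2 b)
  | .inr (.inr x) => ⟨if x.val < 3 then x.val else r1 + (x.val - 3), by
      have := x.isLt; split <;> omega⟩

def CRel (h1 : 3 ≤ r1) (h2 : 3 ≤ r2) (G1 : SimpleGraph (Fin n1)) (G2 : SimpleGraph (Fin n2))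
    (P1 : Fin n1 → Fin r1) (P2 : Fin n2 → Fin r2) :
    (Fin n1 ⊕ Fin n2 ⊕ Fin 6) → (Fin n1 ⊕ Fin n2 ⊕ Fin 6) → Prop
  | .inl a, .inl b => G1.Adj a b
  | .inr (.inl a), .inr (.inl b) => G2.Adj a b
  | .inr (.inr x), .inr (.inr y) => extRel x.val y.val
  | u, v => Q h1 h2 P1 P2 u ≠ Q h1 h2 P1 P2 v

variable (h1 : 3 ≤ r1) (h2 : 3 ≤ r2) (G1 : SimpleGraph (Fin n1)) (G2 : SimpleGraph (Fin n2))
    (P1 : Fin n1 → Fin r1) (P2 : Fin n2 → Fin r2)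

lemma Q_ext_val (x : Fin 6) :
    (Q h1 h2 P1 P2 (.inr (.inr x))).val = if x.val < 3 then x.val else r1 + (x.val - 3) := rfl

lemma Q_ext_val' (mv : ℕ) (h6 : mv < 6) :
    (Q h1 h2 P1 P2 (.inr (.inr ⟨mv, h6⟩))).val = if mv < 3 then mv else r1 + (mv - 3) := rfl

lemma build_clique
    (hC1 : ∀ S1 : Finset (Fin r1), S1.card = 2 →
      ∃ T1 : Finset (Fin n1), G1.IsNClique (r1 - 1 - 1) T1 ∧ ∀ v ∈ T1, P1 v ∉ S1)
    (hC2 : ∀ S2 : Finset (Fin r2), S2.card = 2 →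
      ∃ T2 : Finset (Fin n2), G2.IsNClique (r2 - 1 - 1) T2 ∧ ∀ v ∈ T2, P2 v ∉ S2)
    (S : Finset (Fin (r1 + r2))) (x y : Fin 6)
    (S1 : Finset (Fin r1)) (S2 : Finset (Fin r2))
    (hS1 : S1.card = 2) (hS2 : S2.card = 2)
    (hxy : extRel x.val y.val)
    (hxS : Q h1 h2 P1 P2 (.inr (.inr x)) ∉ S)
    (hyS : Q h1 h2 P1 P2 (.inr (.inr y)) ∉ S)
    (hcastS : ∀ c : Fin r1, Fin.castAdd r2 c ∈ S → c ∈ S1)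
    (hxcast : ∀ c : Fin r1, Q h1 h2 P1 P2 (.inr (.inr x)) = Fin.castAdd r2 c → c ∈ S1)
    (hycast : ∀ c : Fin r1, Q h1 h2 P1 P2 (.inr (.inr y)) = Fin.castAdd r2 c → c ∈ S1)
    (hnatS : ∀ c : Fin r2, Fin.natAdd r1 c ∈ S → c ∈ S2)
    (hxnat : ∀ c : Fin r2, Q h1 h2 P1 P2 (.inr (.inr x)) = Fin.natAdd r1 c → c ∈ S2)
    (hynat : ∀ c : Fin r2, Q h1 h2 P1 P2 (.inr (.inr y)) = Fin.natAdd r1 c → c ∈ S2) :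
    ∃ T : Finset (Fin n1 ⊕ Fin n2 ⊕ Fin 6),
      (SimpleGraph.fromRel (CRel h1 h2 G1 G2 P1 P2)).IsNClique (r1 + r2 - 1 - 1) T ∧
      ∀ v ∈ T, Q h1 h2 P1 P2 v ∉ S := by
  classical
  obtain ⟨T1, hT1, hT1S⟩ := hC1 S1 hS1
  obtain ⟨T2, hT2, hT2S⟩ := hC2 S2 hS2
  have hxny : x ≠ y := ext_ne x y hxy
  set embL : Fin n1 ↪ (Fin n1 ⊕ Fin n2 ⊕ Fin 6) := ⟨Sum.inl, Sum.inl_injective⟩ with hembL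
  set embR : Fin n2 ↪ (Fin n1 ⊕ Fin n2 ⊕ Fin 6) :=
    ⟨fun b => Sum.inr (Sum.inl b), fun a b h => by simpa using h⟩ with hembR
  -- helper inequalities
  have hQx1 : ∀ a ∈ T1, Q h1 h2 P1 P2 (.inl a) ≠ Q h1 h2 P1 P2 (.inr (.inr x)) := by
    intro a ha h
    exact hT1S a ha (hxcast (P1 a) h.symm)
  have hQy1 : ∀ a ∈ T1, Q h1 h2 P1 P2 (.inl a) ≠ Q h1 h2 P1 P2 (.inr (.inr y)) := by
    intro a ha h
    exact hT1S a ha (hycast (P1 a) h.symm)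
  have hQx2 : ∀ b ∈ T2, Q h1 h2 P1 P2 (.inr (.inl b)) ≠ Q h1 h2 P1 P2 (.inr (.inr x)) := by
    intro b hb h
    exact hT2S b hb (hxnat (P2 b) h.symm)
  have hQy2 : ∀ b ∈ T2, Q h1 h2 P1 P2 (.inr (.inl b)) ≠ Q h1 h2 P1 P2 (.inr (.inr y)) := by
    intro b hb h
    exact hT2S b hb (hynat (P2 b) h.symm)
  have hQLR : ∀ (a : Fin n1) (b : Fin n2),
      Q h1 h2 P1 P2 (.inl a) ≠ Q h1 h2 P1 P2 (.inr (.inl b)) := by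
    intro a b h
    have := congrArg Fin.val h
    simp only [Q, Fin.coe_castAdd, Fin.coe_natAdd] at this
    have := (P1 a).isLt
    omega
  refine ⟨T1.map embL ∪ T2.map embR ∪ {Sum.inr (Sum.inr x), Sum.inr (Sum.inr y)}, ⟨?_, ?_⟩, ?_⟩
  · -- pairwise adjacency
    intro u hu v hv hne
    simp only [Finset.coe_union, Set.mem_union, Finset.mem_coe, Finset.mem_map,
      Finset.coe_insert, Set.mem_insert_iff, Finset.coe_singleton, Set.mem_singleton_iff,
      hembL, hembR, Function.Embedding.coeFn_mk] at hu hv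
    refine ⟨hne, ?_⟩
    rcases hu with (⟨a, ha, rfl⟩ | ⟨b, hb, rfl⟩) | (rfl | rfl) <;>
      rcases hv with (⟨a', ha', rfl⟩ | ⟨b', hb', rfl⟩) | (rfl | rfl)
    · exact Or.inl (hT1.1 (Finset.mem_coe.mpr ha) (Finset.mem_coe.mpr ha')
        (fun h => hne (by rw [h])))
    · exact Or.inl (hQLR a b')
    · exact Or.inl (hQx1 a ha)
    · exact Or.inl (hQy1 a ha)
    · exact Or.inl (hQLR a' b).symm
    · exact Or.inl (hT2.1 (Finset.mem_coe.mpr hb) (Finset.mem_coe.mpr hb')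
        (fun h => hne (by rw [h])))
    · exact Or.inl (hQx2 b hb)
    · exact Or.inl (hQy2 b hb)
    · exact Or.inl (hQx1 a' ha').symm
    · exact Or.inl (hQx2 b' hb').symm
    · exact absurd rfl hne
    · exact Or.inl hxy
    · exact Or.inl (hQy1 a' ha').symm
    · exact Or.inl (hQy2 b' hb').symm
    · exact Or.inr hxy
    · exact absurd rfl hne
  · -- cardinality
    have d1 : Disjoint (T1.map embL) (T2.map embR) := by
      simp only [Finset.disjoint_left, Finset.mem_map, hembL, hembR,
        Function.Embedding.coeFn_mk]
      rintro v ⟨a, ha, rfl⟩ ⟨b, hb, h⟩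
      simp at h
    have d2 : Disjoint (T1.map embL ∪ T2.map embR)
        ({Sum.inr (Sum.inr x), Sum.inr (Sum.inr y)} : Finset (Fin n1 ⊕ Fin n2 ⊕ Fin 6)) := by
      simp only [Finset.disjoint_left, Finset.mem_union, Finset.mem_map, hembL, hembR,
        Function.Embedding.coeFn_mk, Finset.mem_insert, Finset.mem_singleton]
      rintro v (⟨a, ha, rfl⟩ | ⟨b, hb, rfl⟩) (h | h) <;> cases h
    rw [Finset.card_union_of_disjoint d2, Finset.card_union_of_disjoint d1,
      Finset.card_map, Finset.card_map, hT1.2, hT2.2,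
      Finset.card_pair (by simp [hxny])]
    omega
  · -- parts avoid S
    intro v hv
    simp only [Finset.mem_union, Finset.mem_map, hembL, hembR, Function.Embedding.coeFn_mk,
      Finset.mem_insert, Finset.mem_singleton] at hv
    rcases hv with (⟨a, ha, rfl⟩ | ⟨b, hb, rfl⟩) | (rfl | rfl)
    · intro h
      exact hT1S a ha (hcastS (P1 a) h)
    · intro h
      exact hT2S b hb (hnatS (P2 b) h)
    · exact hxS
    · exact hyS

end Combine

section CombineMain

variable {r1 r2 n1 n2 : ℕ} (h1 : 3 ≤ r1) (h2 : 3 ≤ r2)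
    (G1 : SimpleGraph (Fin n1)) (G2 : SimpleGraph (Fin n2))
    (P1 : Fin n1 → Fin r1) (P2 : Fin n2 → Fin r2)

lemma crel_proper (hP1 : ∀ u v, G1.Adj u v → P1 u ≠ P1 v)
    (hP2 : ∀ u v, G2.Adj u v → P2 u ≠ P2 v) :
    ∀ u v, u ≠ v → CRel h1 h2 G1 G2 P1 P2 u v →
      Q h1 h2 P1 P2 u ≠ Q h1 h2 P1 P2 v := by
  intro u v
  match u, v with
  | .inl a, .inl b =>
    intro hne h hq
    exact hP1 a b h (Fin.ext (by simpa [Q] using congrArg Fin.val hq))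
  | .inl a, .inr (.inl b) => exact fun _ h => h
  | .inl a, .inr (.inr z) => exact fun _ h => h
  | .inr (.inl b), .inl a => exact fun _ h => h
  | .inr (.inl a), .inr (.inl b) =>
    intro hne h hq
    have := congrArg Fin.val hq
    simp only [Q, Fin.coe_natAdd] at this
    exact hP2 a b h (Fin.ext (by omega))
  | .inr (.inl b), .inr (.inr z) => exact fun _ h => h
  | .inr (.inr z), .inl a => exact fun _ h => h
  | .inr (.inr z), .inr (.inl b) => exact fun _ h => h
  | .inr (.inr z), .inr (.inr w) =>
    intro hne h hq
    have hv := congrArg Fin.val hq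
    rw [Q_ext_val, Q_ext_val] at hv
    rcases ext_cases z w h with h' | h' | h' | h' | h' | h' | h' | h' | h' | h' <;>
      (simp only [Prod.mk.injEq] at h'; obtain ⟨e1, e2⟩ := h';
        rw [e1, e2] at hv; split_ifs at hv <;> omega)

include h1 h2 in
lemma combine
    (w1 : ∃ (G : SimpleGraph (Fin n1)) (P : Fin n1 → Fin r1),
      (∀ u v, G.Adj u v → P u ≠ P v) ∧ G.CliqueFree (r1 - 1) ∧
      ∀ S : Finset (Fin r1), S.card = 2 →
        ∃ T : Finset (Fin n1), G.IsNClique (r1 - 1 - 1) T ∧ ∀ v ∈ T, P v ∉ S)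
    (w2 : ∃ (G : SimpleGraph (Fin n2)) (P : Fin n2 → Fin r2),
      (∀ u v, G.Adj u v → P u ≠ P v) ∧ G.CliqueFree (r2 - 1) ∧
      ∀ S : Finset (Fin r2), S.card = 2 →
        ∃ T : Finset (Fin n2), G.IsNClique (r2 - 1 - 1) T ∧ ∀ v ∈ T, P v ∉ S) :
    BetaWitness 2 (r1 + r2) (r1 + r2 - 1) (n1 + n2 + 6) := by
  classical
  obtain ⟨G1, P1, hP1, hF1, hC1⟩ := w1
  obtain ⟨G2, P2, hP2, hF2, hC2⟩ := w2
  haveI : Nonempty (Fin n1 ⊕ Fin n2 ⊕ Fin 6) := ⟨Sum.inr (Sum.inr ⟨0, by omega⟩)⟩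
  refine betaWitness_of_card (by simp only [Fintype.card_sum, Fintype.card_fin]; omega)
    (SimpleGraph.fromRel (CRel h1 h2 G1 G2 P1 P2)) (Q h1 h2 P1 P2) ?_ ?_ ?_
  · rintro u v ⟨hne, h | h⟩
    · exact crel_proper h1 h2 G1 G2 P1 P2 hP1 hP2 u v hne h
    · exact (crel_proper h1 h2 G1 G2 P1 P2 hP1 hP2 v u (Ne.symm hne) h).symm
  · -- clique free
    intro T hT
    set T1 := T.toLeft with hT1def
    set TR := T.toRight with hTRdef
    set T2 := TR.toLeft with hT2def
    set T3 := TR.toRight with hT3def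
    have c1 : T1.card < r1 - 1 := by
      refine clique_card_lt hF1 ?_
      intro a ha b hb hne
      have h := hT.1 (Finset.mem_coe.mpr (Finset.mem_toLeft.mp ha))
        (Finset.mem_coe.mpr (Finset.mem_toLeft.mp hb)) (fun hh => hne (by simpa using hh))
      obtain ⟨-, h | h⟩ := h
      · exact h
      · exact h.symm
    have c2 : T2.card < r2 - 1 := by
      refine clique_card_lt hF2 ?_
      intro a ha b hb hne
      have ha' : (Sum.inr (Sum.inl a) : Fin n1 ⊕ Fin n2 ⊕ Fin 6) ∈ T :=
        Finset.mem_toRight.mp (Finset.mem_toLeft.mp ha)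
      have hb' : (Sum.inr (Sum.inl b) : Fin n1 ⊕ Fin n2 ⊕ Fin 6) ∈ T :=
        Finset.mem_toRight.mp (Finset.mem_toLeft.mp hb)
      have h := hT.1 (Finset.mem_coe.mpr ha') (Finset.mem_coe.mpr hb')
        (fun hh => hne (by simpa using hh))
      obtain ⟨-, h | h⟩ := h
      · exact h
      · exact h.symm
    have c3 : T3.card ≤ 2 := by
      by_contra hc
      push_neg at hc
      obtain ⟨U, hU, hU3⟩ := Finset.exists_subset_card_eq hc
      obtain ⟨z1, z2, z3, h12, h13, h23, rfl⟩ := Finset.card_eq_three.mp hU3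
      have hmem : ∀ z ∈ ({z1, z2, z3} : Finset (Fin 6)),
          (Sum.inr (Sum.inr z) : Fin n1 ⊕ Fin n2 ⊕ Fin 6) ∈ T := by
        intro z hz
        exact Finset.mem_toRight.mp (Finset.mem_toRight.mp (hU hz))
      have adj : ∀ z w : Fin 6, z ≠ w →
          (Sum.inr (Sum.inr z) : Fin n1 ⊕ Fin n2 ⊕ Fin 6) ∈ T →
          (Sum.inr (Sum.inr w) : Fin n1 ⊕ Fin n2 ⊕ Fin 6) ∈ T →
          (extRel z.val w.val ∨ extRel w.val z.val) := by
        intro z w hzw hz hw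
        have h := hT.1 (Finset.mem_coe.mpr hz) (Finset.mem_coe.mpr hw)
          (fun hh => hzw (by simpa using hh))
        exact h.2
      exact ext_tri' z1 z2 z3
        (adj z1 z2 h12 (hmem z1 (by simp)) (hmem z2 (by simp)))
        (adj z1 z3 h13 (hmem z1 (by simp)) (hmem z3 (by simp)))
        (adj z2 z3 h23 (hmem z2 (by simp)) (hmem z3 (by simp)))
    have e1 : T1.card + TR.card = T.card := Finset.card_toLeft_add_card_toRight (u := T)
    have e2 : T2.card + T3.card = TR.card := Finset.card_toLeft_add_card_toRight (u := TR)
    have := hT.2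
    omega
  · -- cliques avoiding two parts
    intro S hS
    obtain ⟨s, t, hst, rfl⟩ := Finset.card_eq_two.mp hS
    have hvalne : s.val ≠ t.val := fun h => hst (Fin.ext h)
    have hslt := s.isLt
    have htlt := t.isLt
    have memQ : ∀ (w : Fin (r1 + r2)), w ∈ ({s, t} : Finset (Fin (r1 + r2))) →
        w.val = s.val ∨ w.val = t.val := by
      intro w hw
      rcases Finset.mem_insert.mp hw with h | h
      · exact Or.inl (congrArg Fin.val h)
      · exact Or.inr (congrArg Fin.val (Finset.mem_singleton.mp h))
    have mixed : ∀ s t : Fin (r1 + r2), s.val < r1 → ¬t.val < r1 → s.val ≠ t.val →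
        ∃ T : Finset (Fin n1 ⊕ Fin n2 ⊕ Fin 6),
          (SimpleGraph.fromRel (CRel h1 h2 G1 G2 P1 P2)).IsNClique (r1 + r2 - 1 - 1) T ∧
          ∀ v ∈ T, Q h1 h2 P1 P2 v ∉ ({s, t} : Finset (Fin (r1 + r2))) := by
      clear hvalne hst memQ hS hslt htlt s t
      intro s t hs ht hvalne
      have hslt := s.isLt
      have htlt := t.isLt
      have hm : ∃ m : ℕ, m < 3 ∧ m ≠ s.val ∧ m ≠ t.val - r1 := by
        by_cases e0 : 0 = s.val ∨ 0 = t.val - r1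
        · by_cases e1 : 1 = s.val ∨ 1 = t.val - r1
          · rcases e0 with e0 | e0 <;> rcases e1 with e1 | e1 <;>
              exact ⟨2, by omega, by omega, by omega⟩
          · push_neg at e1
            exact ⟨1, by omega, e1.1, e1.2⟩
        · push_neg at e0
          exact ⟨0, by omega, e0.1, e0.2⟩
      obtain ⟨m, hm3, hms, hmt⟩ := hm
      refine build_clique h1 h2 G1 G2 P1 P2 hC1 hC2 {s, t} ⟨m, by omega⟩ ⟨m + 3, by omega⟩
        {⟨s.val, hs⟩, ⟨m, by omega⟩} {⟨t.val - r1, by omega⟩, ⟨m, by omega⟩}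
        ?_ ?_ ?_ ?_ ?_ ?_ ?_ ?_ ?_ ?_ ?_
      · refine Finset.card_pair fun h => ?_
        simp only [Fin.mk.injEq] at h
        exact hms h.symm
      · refine Finset.card_pair fun h => ?_
        simp only [Fin.mk.injEq] at h
        exact hmt h.symm
      · exact ext_match ⟨m, hm3⟩
      · intro hmem
        rcases Finset.mem_insert.mp hmem with h | h
        · have hv := congrArg Fin.val h
          rw [Q_ext_val'] at hv
          split_ifs at hv <;> omega
        · have hv := congrArg Fin.val (Finset.mem_singleton.mp h)
          rw [Q_ext_val'] at hv
          split_ifs at hv <;> omega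
      · intro hmem
        rcases Finset.mem_insert.mp hmem with h | h
        · have hv := congrArg Fin.val h
          rw [Q_ext_val'] at hv
          split_ifs at hv <;> omega
        · have hv := congrArg Fin.val (Finset.mem_singleton.mp h)
          rw [Q_ext_val'] at hv
          split_ifs at hv <;> omega
      · intro c hc
        have hcl := c.isLt
        rcases Finset.mem_insert.mp hc with h | h
        · have hv := congrArg Fin.val h
          simp only [Fin.coe_castAdd] at hv
          exact Finset.mem_insert.mpr (Or.inl (Fin.ext (by simpa using hv)))
        · have hv := congrArg Fin.val (Finset.mem_singleton.mp h)
          simp only [Fin.coe_castAdd] at hv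
          omega
      · intro c h
        have hcl := c.isLt
        have hv := congrArg Fin.val h
        rw [Q_ext_val'] at hv
        simp only [Fin.coe_castAdd] at hv
        rw [if_pos hm3] at hv
        exact Finset.mem_insert.mpr (Or.inr (Finset.mem_singleton.mpr
          (Fin.ext (by simpa using hv.symm))))
      · intro c h
        have hcl := c.isLt
        have hv := congrArg Fin.val h
        rw [Q_ext_val'] at hv
        simp only [Fin.coe_castAdd] at hv
        split_ifs at hv <;> omega
      · intro c hc
        have hcl := c.isLt
        rcases Finset.mem_insert.mp hc with h | h
        · have hv := congrArg Fin.val h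
          simp only [Fin.coe_natAdd] at hv
          omega
        · have hv := congrArg Fin.val (Finset.mem_singleton.mp h)
          simp only [Fin.coe_natAdd] at hv
          exact Finset.mem_insert.mpr (Or.inl (Fin.ext (by simp; omega)))
      · intro c h
        have hcl := c.isLt
        have hv := congrArg Fin.val h
        rw [Q_ext_val'] at hv
        simp only [Fin.coe_natAdd] at hv
        split_ifs at hv <;> omega
      · intro c h
        have hcl := c.isLt
        have hv := congrArg Fin.val h
        rw [Q_ext_val'] at hv
        simp only [Fin.coe_natAdd] at hv
        rw [if_neg (by omega : ¬ m + 3 < 3)] at hv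
        exact Finset.mem_insert.mpr (Or.inr (Finset.mem_singleton.mpr
          (Fin.ext (by simp; omega))))
    by_cases hs : s.val < r1 <;> by_cases ht : t.val < r1
    · -- both left
      refine build_clique h1 h2 G1 G2 P1 P2 hC1 hC2 {s, t} ⟨3, by omega⟩ ⟨4, by omega⟩
        {⟨s.val, hs⟩, ⟨t.val, ht⟩} {⟨0, by omega⟩, ⟨1, by omega⟩}
        ?_ ?_ (show extRel 3 4 by decide) ?_ ?_ ?_ ?_ ?_ ?_ ?_ ?_
      · refine Finset.card_pair fun h => ?_
        simp only [Fin.mk.injEq] at h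
        exact hvalne h
      · exact Finset.card_pair (by simp [Fin.ext_iff])
      · intro hmem
        have hv : (r1 : ℕ) = s.val ∨ (r1 : ℕ) = t.val := by
          rcases memQ _ hmem with h | h
          · exact Or.inl (by rw [← h]; rfl)
          · exact Or.inr (by rw [← h]; rfl)
        omega
      · intro hmem
        have hv : (r1 + 1 : ℕ) = s.val ∨ (r1 + 1 : ℕ) = t.val := by
          rcases memQ _ hmem with h | h
          · exact Or.inl (by rw [← h]; rfl)
          · exact Or.inr (by rw [← h]; rfl)
        omega
      · intro c hc
        have hcl := c.isLt
        rcases Finset.mem_insert.mp hc with h | h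
        · have hv := congrArg Fin.val h
          simp only [Fin.coe_castAdd] at hv
          exact Finset.mem_insert.mpr (Or.inl (Fin.ext (by simpa using hv)))
        · have hv := congrArg Fin.val (Finset.mem_singleton.mp h)
          simp only [Fin.coe_castAdd] at hv
          exact Finset.mem_insert.mpr (Or.inr (Finset.mem_singleton.mpr
            (Fin.ext (by simpa using hv))))
      · intro c h
        have hcl := c.isLt
        have hv := congrArg Fin.val h
        rw [Q_ext_val'] at hv
        simp only [Fin.coe_castAdd] at hv
        split_ifs at hv <;> omega
      · intro c h
        have hcl := c.isLt
        have hv := congrArg Fin.val h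
        rw [Q_ext_val'] at hv
        simp only [Fin.coe_castAdd] at hv
        split_ifs at hv <;> omega
      · intro c hc
        have hcl := c.isLt
        rcases Finset.mem_insert.mp hc with h | h
        · have hv := congrArg Fin.val h
          simp only [Fin.coe_natAdd] at hv
          omega
        · have hv := congrArg Fin.val (Finset.mem_singleton.mp h)
          simp only [Fin.coe_natAdd] at hv
          omega
      · intro c h
        have hcl := c.isLt
        have hv := congrArg Fin.val h
        rw [Q_ext_val'] at hv
        simp only [Fin.coe_natAdd] at hv
        rw [if_neg (by norm_num : ¬ (3:ℕ) < 3)] at hv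
        exact Finset.mem_insert.mpr (Or.inl (Fin.ext (by simp; omega)))
      · intro c h
        have hcl := c.isLt
        have hv := congrArg Fin.val h
        rw [Q_ext_val'] at hv
        simp only [Fin.coe_natAdd] at hv
        rw [if_neg (by norm_num : ¬ (4:ℕ) < 3)] at hv
        exact Finset.mem_insert.mpr (Or.inr (Finset.mem_singleton.mpr
          (Fin.ext (by simp; omega))))
    · exact mixed s t hs ht hvalne
    · rw [Finset.pair_comm]
      exact mixed t s ht hs (Ne.symm hvalne)
    · -- both right
      push_neg at hs ht
      refine build_clique h1 h2 G1 G2 P1 P2 hC1 hC2 {s, t} ⟨0, by omega⟩ ⟨1, by omega⟩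
        {⟨0, by omega⟩, ⟨1, by omega⟩} {⟨s.val - r1, by omega⟩, ⟨t.val - r1, by omega⟩}
        ?_ ?_ (show extRel 0 1 by decide) ?_ ?_ ?_ ?_ ?_ ?_ ?_ ?_
      · exact Finset.card_pair (by simp [Fin.ext_iff])
      · refine Finset.card_pair fun h => ?_
        simp only [Fin.mk.injEq] at h
        omega
      · intro hmem
        have hv : (0 : ℕ) = s.val ∨ (0 : ℕ) = t.val := by
          rcases memQ _ hmem with h | h
          · exact Or.inl (by rw [← h]; rfl)
          · exact Or.inr (by rw [← h]; rfl)
        omega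
      · intro hmem
        have hv : (1 : ℕ) = s.val ∨ (1 : ℕ) = t.val := by
          rcases memQ _ hmem with h | h
          · exact Or.inl (by rw [← h]; rfl)
          · exact Or.inr (by rw [← h]; rfl)
        omega
      · intro c hc
        have hcl := c.isLt
        rcases Finset.mem_insert.mp hc with h | h
        · have hv := congrArg Fin.val h
          simp only [Fin.coe_castAdd] at hv
          omega
        · have hv := congrArg Fin.val (Finset.mem_singleton.mp h)
          simp only [Fin.coe_castAdd] at hv
          omega
      · intro c h
        have hcl := c.isLt
        have hv := congrArg Fin.val h
        rw [Q_ext_val'] at hv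
        simp only [Fin.coe_castAdd] at hv
        rw [if_pos (by norm_num : (0:ℕ) < 3)] at hv
        exact Finset.mem_insert.mpr (Or.inl (Fin.ext (by simp; omega)))
      · intro c h
        have hcl := c.isLt
        have hv := congrArg Fin.val h
        rw [Q_ext_val'] at hv
        simp only [Fin.coe_castAdd] at hv
        rw [if_pos (by norm_num : (1:ℕ) < 3)] at hv
        exact Finset.mem_insert.mpr (Or.inr (Finset.mem_singleton.mpr
          (Fin.ext (by simp; omega))))
      · intro c hc
        have hcl := c.isLt
        rcases Finset.mem_insert.mp hc with h | h
        · have hv := congrArg Fin.val h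
          simp only [Fin.coe_natAdd] at hv
          exact Finset.mem_insert.mpr (Or.inl (Fin.ext (by simp; omega)))
        · have hv := congrArg Fin.val (Finset.mem_singleton.mp h)
          simp only [Fin.coe_natAdd] at hv
          exact Finset.mem_insert.mpr (Or.inr (Finset.mem_singleton.mpr
            (Fin.ext (by simp; omega))))
      · intro c h
        have hcl := c.isLt
        have hv := congrArg Fin.val h
        rw [Q_ext_val'] at hv
        simp only [Fin.coe_natAdd] at hv
        split_ifs at hv <;> omega
      · intro c h
        have hcl := c.isLt
        have hv := congrArg Fin.val h
        rw [Q_ext_val'] at hv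
        simp only [Fin.coe_natAdd] at hv
        split_ifs at hv <;> omega

end CombineMain

theorem stmt_19 (r1 r2 : ℕ) (h1 : 3 ≤ r1) (h2 : 3 ≤ r2) :
    beta 2 (r1 + r2) (r1 + r2 - 1) ≤ beta 2 r1 (r1 - 1) + beta 2 r2 (r2 - 1) + 6 := by
  obtain ⟨m1, hm1⟩ := base_witness r1 h1
  obtain ⟨m2, hm2⟩ := base_witness r2 h2
  have hb1 : BetaWitness 2 r1 (r1 - 1) (beta 2 r1 (r1 - 1)) :=
    Nat.sInf_mem (⟨m1, hm1⟩ : {n | BetaWitness 2 r1 (r1 - 1) n}.Nonempty)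
  have hb2 : BetaWitness 2 r2 (r2 - 1) (beta 2 r2 (r2 - 1)) :=
    Nat.sInf_mem (⟨m2, hm2⟩ : {n | BetaWitness 2 r2 (r2 - 1) n}.Nonempty)
  exact Nat.sInf_le (combine h1 h2 hb1 hb2)
end
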